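/- arXiv:2506.00372 — 3 statements merged into one kernel-verified Lean document; each statement's English description precedes it below -/
import Mathlib

section
/- Fix an aggregation correspondence X. If a pair (μ,λ) rationalizes a stochastic choice function ρ and μ is non-overlapping, then for every composition distribution λ' (for the same aggregation correspondence X), the pair (μ,λ') also rationalizes ρ. -/
open Finset

noncomputable section

/-- A ranking (strict linear order) on a finite type `T`, encoded as a bijection with
`Fin (Fintype.card T)`; a lower index means a better alternative. -/
abbrev Ranking (T : Type) [Fintype T] : Type := T ≃ Fin (Fintype.card T)

/-- `x` is strictly preferred to `y` according to the ranking `r`. -/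
def Ranking.pref {T : Type} [Fintype T] (r : Ranking T) (x y : T) : Prop :=
  r x < r y

/-- The `r`-best (most preferred) element of a nonempty finite set `D`. -/
def Ranking.best {T : Type} [Fintype T] [DecidableEq T] (r : Ranking T) (D : Finset T)
    (hD : D.Nonempty) : T :=
  r.symm ((D.image fun x => r x).min' (hD.image fun x => r x))

/-- `μ` is a probability distribution on the finite type `T`. -/
def IsDistr {T : Type} [Fintype T] (μ : T → ℝ) : Prop :=
  (∀ t, 0 ≤ μ t) ∧ (∑ t, μ t) = 1

open Classical in
/-- The probability of the event `P` under the distribution `μ`. -/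
def probOf {T : Type} [Fintype T] (μ : T → ℝ) (P : T → Prop) : ℝ :=
  ∑ t, if P t then μ t else 0

/-- `ρ` is a stochastic choice function on the domain `𝒟`: on every menu of the domain it is
nonnegative, sums to one over the menu, and vanishes outside the menu. -/
def IsSCF {A : Type} [Fintype A] [DecidableEq A] (𝒟 : Finset (Finset A))
    (ρ : Finset A → A → ℝ) : Prop :=
  ∀ B ∈ 𝒟, (∀ a ∈ B, 0 ≤ ρ B a) ∧ ((∑ a ∈ B, ρ B a) = 1) ∧ (∀ a ∉ B, ρ B a = 0)

/-- An aggregation correspondence for the set `AN` of non-atomic aggregates: pairwise disjoint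
nonempty sets of underlying alternatives, singletons exactly on atomic aggregates. -/
structure AggCorr (A 𝒳 : Type) [Fintype A] [DecidableEq A] [Fintype 𝒳] [DecidableEq 𝒳]
    (AN : Finset A) where
  X : A → Finset 𝒳
  disj : ∀ a b, a ≠ b → Disjoint (X a) (X b)
  atomic : ∀ a ∉ AN, (X a).card = 1
  nonatomic : ∀ a ∈ AN, 2 ≤ (X a).card

/-- `lam` is a composition distribution for the aggregation correspondence `Xc` on the domain
`𝒟`: for every menu `B ∈ 𝒟` it is a probability distribution over profiles `S` of nonempty
subsets `S a ⊆ X a`. -/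
def IsCompDistr {A 𝒳 : Type} [Fintype A] [DecidableEq A] [Fintype 𝒳] [DecidableEq 𝒳]
    {AN : Finset A} (Xc : AggCorr A 𝒳 AN) (𝒟 : Finset (Finset A))
    (lam : Finset A → (A → Finset 𝒳) → ℝ) : Prop :=
  ∀ B ∈ 𝒟, IsDistr (lam B) ∧
    ∀ S : A → Finset 𝒳, lam B S ≠ 0 → ∀ a, S a ⊆ Xc.X a ∧ (S a).Nonempty

/-- The pair `(μ, lam)` (for the aggregation correspondence `Xc`) rationalizes `ρ` on `𝒟`. -/
def Rationalizes {A 𝒳 : Type} [Fintype A] [DecidableEq A] [Fintype 𝒳] [DecidableEq 𝒳]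
    {AN : Finset A} (Xc : AggCorr A 𝒳 AN) (𝒟 : Finset (Finset A))
    (μ : Ranking 𝒳 → ℝ) (lam : Finset A → (A → Finset 𝒳) → ℝ)
    (ρ : Finset A → A → ℝ) : Prop :=
  IsDistr μ ∧ IsCompDistr Xc 𝒟 lam ∧
    ∀ B ∈ 𝒟, ∀ a ∈ B,
      ρ B a = ∑ S : A → Finset 𝒳, lam B S *
        probOf μ (fun r => ∃ x ∈ S a, ∀ b ∈ B, b ≠ a → ∀ y ∈ S b, Ranking.pref r x y)

/-- RU-rationality: some pair `(μ, lam)` for some aggregation correspondence with underlying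
alternatives `𝒳` and non-atomic aggregates `AN` rationalizes `ρ`. -/
def RURational (𝒳 : Type) [Fintype 𝒳] [DecidableEq 𝒳] {A : Type} [Fintype A] [DecidableEq A]
    (AN : Finset A) (𝒟 : Finset (Finset A)) (ρ : Finset A → A → ℝ) : Prop :=
  ∃ Xc : AggCorr A 𝒳 AN, ∃ μ lam, Rationalizes Xc 𝒟 μ lam ρ

/-- ARU-rationality: `ρ` is a random utility model over the aggregates themselves. -/
def ARURational {A : Type} [Fintype A] [DecidableEq A]
    (𝒟 : Finset (Finset A)) (ρ : Finset A → A → ℝ) : Prop :=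
  ∃ μA : Ranking A → ℝ, IsDistr μA ∧
    ∀ B ∈ 𝒟, ∀ a ∈ B, ρ B a = probOf μA (fun r => ∀ b ∈ B, b ≠ a → Ranking.pref r a b)

/-- Partial RU-rationality: on menus of atomic aggregates only, `ρ` is a random utility model
over linear orders on the atomic aggregates `AA`. -/
def PartialRURational {A : Type} [Fintype A] [DecidableEq A]
    (AA : Finset A) (𝒟 : Finset (Finset A)) (ρ : Finset A → A → ℝ) : Prop :=
  ∃ ν : Ranking {c : A // c ∈ AA} → ℝ, IsDistr ν ∧
    ∀ B ∈ 𝒟, ∀ (hB : B ⊆ AA), ∀ a, ∀ (ha : a ∈ B),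
      ρ B a = probOf ν (fun r =>
        ∀ b : {c : A // c ∈ AA}, (b : A) ∈ B → (b : A) ≠ a → Ranking.pref r ⟨a, hB ha⟩ b)

/-- Limited Monotonicity (outside-option form): adding the outside option `a0` to a menu of
atomic aggregates weakly decreases every atomic choice frequency. -/
def LimitedMono {A : Type} [Fintype A] [DecidableEq A]
    (a0 : A) (AA : Finset A) (𝒟 : Finset (Finset A)) (ρ : Finset A → A → ℝ) : Prop :=
  ∀ D : Finset A, D ⊆ AA → D ∈ 𝒟 → insert a0 D ∈ 𝒟 →
    ∀ b ∈ D, ρ (insert a0 D) b ≤ ρ D b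

/-- Limited Monotonicity (general form): adding any set `E` of non-atomic aggregates to a menu
of atomic aggregates weakly decreases every atomic choice frequency. -/
def LimitedMonoGen {A : Type} [Fintype A] [DecidableEq A]
    (AA AN : Finset A) (𝒟 : Finset (Finset A)) (ρ : Finset A → A → ℝ) : Prop :=
  ∀ D E : Finset A, D ⊆ AA → E ⊆ AN → D ∈ 𝒟 → D ∪ E ∈ 𝒟 →
    ∀ b ∈ D, ρ (D ∪ E) b ≤ ρ D b

/-- The full domain: all nonempty subsets of `A`. -/
def fullDomain (A : Type) [Fintype A] [DecidableEq A] : Finset (Finset A) :=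
  Finset.univ.filter fun D => D.Nonempty

/-- The deterministic "menu-effect" stochastic choice function `ρ^≻_𝓔`: it puts probability 1
on the `r`-maximum of `D` if `a0 ∉ D` or `D ∈ E`, and probability 1 on `a0` otherwise. -/
def vertexSCF {A : Type} [Fintype A] [DecidableEq A]
    (a0 : A) (r : Ranking A) (E : Finset (Finset A)) : Finset A → A → ℝ :=
  fun D a =>
    if h : D.Nonempty then
      if a0 ∉ D ∨ D ∈ E then (if a = Ranking.best r D h then 1 else 0)
      else (if a = a0 then 1 else 0)
    else 0

open Classical in
/-- The deterministic menu-effect stochastic choice function with multiple non-atomic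
aggregates: on a menu `D` belonging to `E b` (for the necessarily unique such `b`, the
collections being pairwise disjoint) it puts probability 1 on `b`; otherwise it puts
probability 1 on the `r`-maximum of `D`. -/
def vertexSCFM {A : Type} [Fintype A] [DecidableEq A]
    (r : Ranking A) (E : A → Finset (Finset A)) : Finset A → A → ℝ :=
  fun D a =>
    if h : D.Nonempty then
      if hex : ∃ b, D ∈ E b then (if a = Classical.choose hex then 1 else 0)
      else (if a = Ranking.best r D h then 1 else 0)
    else 0

/-- Restriction of a choice function to the coordinates `(D, a)` with `D ∈ 𝒟`, viewed as a
vector in `ℝ^(Finset A × A)`. -/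
def restrictTo {A : Type} [Fintype A] [DecidableEq A] (𝒟 : Finset (Finset A))
    (ρ : Finset A → A → ℝ) : Finset A × A → ℝ :=
  fun p => if p.1 ∈ 𝒟 then ρ p.1 p.2 else 0

/-- `RU(n)` (outside-option setup): `ρ` is rationalized by some pair whose aggregation
correspondence satisfies `|X(a0)| = n`. -/
def RUn (𝒳 : Type) [Fintype 𝒳] [DecidableEq 𝒳] {A : Type} [Fintype A] [DecidableEq A]
    (a0 : A) (𝒟 : Finset (Finset A)) (n : ℕ) (ρ : Finset A → A → ℝ) : Prop :=
  ∃ Xc : AggCorr A 𝒳 ({a0} : Finset A), (Xc.X a0).card = n ∧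
    ∃ μ lam, Rationalizes Xc 𝒟 μ lam ρ

/-- `RU((n_a))`: `ρ` is rationalized by some pair whose aggregation correspondence satisfies
`|X(a)| = nv a` for every non-atomic aggregate `a`. -/
def RUvec (𝒳 : Type) [Fintype 𝒳] [DecidableEq 𝒳] {A : Type} [Fintype A] [DecidableEq A]
    (AN : Finset A) (𝒟 : Finset (Finset A)) (nv : A → ℕ) (ρ : Finset A → A → ℝ) : Prop :=
  ∃ Xc : AggCorr A 𝒳 AN, (∀ a ∈ AN, (Xc.X a).card = nv a) ∧
    ∃ μ lam, Rationalizes Xc 𝒟 μ lam ρ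

/-- `μ` is non-overlapping for `Xc`: in every ranking in the support of `μ`, the underlying
alternatives of each non-atomic aggregate occupy adjacent positions. -/
def NonOverlapping {A 𝒳 : Type} [Fintype A] [DecidableEq A] [Fintype 𝒳] [DecidableEq 𝒳]
    {AN : Finset A} (Xc : AggCorr A 𝒳 AN) (μ : Ranking 𝒳 → ℝ) : Prop :=
  ∀ r : Ranking 𝒳, μ r ≠ 0 → ∀ a ∈ AN, ∀ y ∈ Xc.X a, ∀ z ∈ Xc.X a, ∀ x : 𝒳,
    Ranking.pref r y x → Ranking.pref r x z → x ∈ Xc.X a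

/-- `lam` is menu-independent: there is a single (unconditional) probability distribution over
full profiles whose marginal on the coordinates of each menu `B ∈ 𝒟` coincides with `lam B`. -/
def MenuIndependent {A 𝒳 : Type} [Fintype A] [DecidableEq A] [Fintype 𝒳] [DecidableEq 𝒳]
    {AN : Finset A} (Xc : AggCorr A 𝒳 AN) (𝒟 : Finset (Finset A))
    (lam : Finset A → (A → Finset 𝒳) → ℝ) : Prop :=
  ∃ lamBar : (A → Finset 𝒳) → ℝ, IsDistr lamBar ∧
    (∀ S : A → Finset 𝒳, lamBar S ≠ 0 → ∀ a, S a ⊆ Xc.X a ∧ (S a).Nonempty) ∧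
    ∀ B ∈ 𝒟, ∀ S0 : A → Finset 𝒳,
      probOf (lam B) (fun S => ∀ b ∈ B, S b = S0 b)
        = probOf lamBar (fun S => ∀ b ∈ B, S b = S0 b)

/-- Squared Euclidean distance between two stochastic choice functions on the coordinates of
the domain `𝒟`. -/
def distSq {A : Type} [Fintype A] [DecidableEq A] (𝒟 : Finset (Finset A))
    (ρ ρ' : Finset A → A → ℝ) : ℝ :=
  ∑ B ∈ 𝒟, ∑ a ∈ B, (ρ B a - ρ' B a) ^ 2

/-- **Lemma A.1(a)**: if `(μ, λ)` rationalizes `ρ` and `μ` is non-overlapping, then `(μ, λ')`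
rationalizes `ρ` for every composition distribution `λ'` (for the same aggregation
correspondence). -/
theorem stmt13 {A 𝒳 : Type} [Fintype A] [DecidableEq A] [Fintype 𝒳] [DecidableEq 𝒳]
    {AN : Finset A} (Xc : AggCorr A 𝒳 AN)
    (𝒟 : Finset (Finset A)) (h𝒟 : ∀ B ∈ 𝒟, B.Nonempty)
    (μ : Ranking 𝒳 → ℝ) (lam lam' : Finset A → (A → Finset 𝒳) → ℝ)
    (ρ : Finset A → A → ℝ)
    (h : Rationalizes Xc 𝒟 μ lam ρ) (hno : NonOverlapping Xc μ)
    (hlam' : IsCompDistr Xc 𝒟 lam') :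
    Rationalizes Xc 𝒟 μ lam' ρ := by
  classical
  obtain ⟨hμ, hlam, hρ⟩ := h
  refine ⟨hμ, hlam', ?_⟩
  intro B hB a ha
  -- The S-independent event
  set P : Ranking 𝒳 → Prop :=
    fun r => ∀ b ∈ B, b ≠ a → ∀ x ∈ Xc.X a, ∀ y ∈ Xc.X b, Ranking.pref r x y with hP
  have key : ∀ (S : A → Finset 𝒳), (∀ c, S c ⊆ Xc.X c ∧ (S c).Nonempty) →
      ∀ r : Ranking 𝒳, μ r ≠ 0 →
      ((∃ x ∈ S a, ∀ b ∈ B, b ≠ a → ∀ y ∈ S b, Ranking.pref r x y) ↔ P r) := by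
    intro S hS r hr
    constructor
    · rintro ⟨x, hxS, hx⟩ b hb hba x' hx' y' hy'
      have hxX : x ∈ Xc.X a := (hS a).1 hxS
      obtain ⟨y0, hy0S⟩ := (hS b).2
      have hy0X : y0 ∈ Xc.X b := (hS b).1 hy0S
      have hxy0 : Ranking.pref r x y0 := hx b hb hba y0 hy0S
      by_contra hcon
      have hne : x' ≠ y' := fun hxy =>
        (Finset.disjoint_left.mp (Xc.disj a b hba.symm) hx') (hxy ▸ hy')
      have hy'x' : Ranking.pref r y' x' :=
        lt_of_le_of_ne (not_lt.mp hcon) (fun hh => hne (r.injective hh.symm))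
      by_cases hcase : Ranking.pref r y' x
      · -- y' ≻ x ≻ y0 with y', y0 ∈ X b
        by_cases hbN : b ∈ AN
        · exact (Finset.disjoint_left.mp (Xc.disj a b hba.symm) hxX)
            (hno r hr b hbN y' hy' y0 hy0X x hcase hxy0)
        · obtain ⟨v, hv⟩ := Finset.card_eq_one.mp (Xc.atomic b hbN)
          rw [hv, Finset.mem_singleton] at hy' hy0X
          subst hy'; subst hy0X
          exact absurd (lt_trans hcase hxy0) (lt_irrefl _)
      · -- x ≻ y' ≻ x' with x, x' ∈ X a
        have hne2 : x ≠ y' := fun hxy =>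
          (Finset.disjoint_left.mp (Xc.disj a b hba.symm) hxX) (hxy ▸ hy')
        have hxy' : Ranking.pref r x y' :=
          lt_of_le_of_ne (not_lt.mp hcase) (fun hh => hne2 (r.injective hh))
        by_cases haN : a ∈ AN
        · exact (Finset.disjoint_left.mp (Xc.disj b a hba) hy')
            (hno r hr a haN x hxX x' hx' y' hxy' hy'x')
        · obtain ⟨v, hv⟩ := Finset.card_eq_one.mp (Xc.atomic a haN)
          rw [hv, Finset.mem_singleton] at hxX hx'
          subst hxX; subst hx'
          exact absurd (lt_trans hxy' hy'x') (lt_irrefl _)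
    · intro hPr
      obtain ⟨x, hxS⟩ := (hS a).2
      exact ⟨x, hxS, fun b hb hba y hyS =>
        hPr b hb hba x ((hS a).1 hxS) y ((hS b).1 hyS)⟩
  -- probOf is S-independent for valid S
  have probEq : ∀ (S : A → Finset 𝒳), (∀ c, S c ⊆ Xc.X c ∧ (S c).Nonempty) →
      probOf μ (fun r => ∃ x ∈ S a, ∀ b ∈ B, b ≠ a → ∀ y ∈ S b, Ranking.pref r x y)
        = probOf μ P := by
    intro S hS
    unfold probOf
    refine Finset.sum_congr rfl fun r _ => ?_
    by_cases hr : μ r = 0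
    · simp [hr]
    · simp only [key S hS r hr]
      congr!
  -- the rationalizing sum equals probOf μ P for any composition distribution
  have sumEq : ∀ lamc : Finset A → (A → Finset 𝒳) → ℝ, IsCompDistr Xc 𝒟 lamc →
      (∑ S : A → Finset 𝒳, lamc B S *
        probOf μ (fun r => ∃ x ∈ S a, ∀ b ∈ B, b ≠ a → ∀ y ∈ S b, Ranking.pref r x y))
        = probOf μ P := by
    intro lamc hc
    obtain ⟨hd, hsupp⟩ := hc B hB
    have : ∀ S : A → Finset 𝒳, lamc B S *
        probOf μ (fun r => ∃ x ∈ S a, ∀ b ∈ B, b ≠ a → ∀ y ∈ S b, Ranking.pref r x y)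
        = lamc B S * probOf μ P := by
      intro S
      by_cases hz : lamc B S = 0
      · simp [hz]
      · rw [probEq S (hsupp S hz)]
    rw [Finset.sum_congr rfl fun S _ => this S, ← Finset.sum_mul, hd.2, one_mul]
  rw [hρ B hB a ha, sumEq lam hlam, sumEq lam' hlam']
end
end

section
/- Assume the full domain 𝒟 = 2^𝒜 ∖ {∅} and that 𝒳 is sufficiently large (|𝒳| ≥ |𝒜_A| + n·|𝒜_N| suffices). Fix an integer n with 2 < n < |𝒜_A| + 2. For every stochastic choice function ρ satisfying Limited Monotonicity (general form) and partial RU-rationality, there exists ρ' ∈ RU((n)) such that ‖ρ − ρ'‖² / |𝒟| ≤ 1/(n − 1), where (n) is the constant vector with every entry equal to n. -/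
open Finset

noncomputable section

section PiLemmas
variable {γ : Type} [Fintype γ] [DecidableEq γ] {κ : Type} [Fintype κ]

lemma sum_pi_prod (c : γ → κ → ℝ) :
    ∑ d : γ → κ, ∏ B, c B (d B) = ∏ B, ∑ o, c B o := by
  rw [Finset.prod_univ_sum, Fintype.piFinset_univ]

lemma sum_pi_single (c : γ → κ → ℝ) (h1 : ∀ B, ∑ o, c B o = 1) (B₀ : γ) (f : κ → ℝ) :
    ∑ d : γ → κ, (∏ B, c B (d B)) * f (d B₀) = ∑ o, c B₀ o * f o := by
  have key : ∀ d : γ → κ, (∏ B, c B (d B)) * f (d B₀)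
      = ∏ B, (c B (d B) * (if B = B₀ then f (d B) else 1)) := by
    intro d
    rw [Finset.prod_mul_distrib, Finset.prod_ite_eq' univ B₀ (fun B => f (d B))]
    simp
  simp_rw [key]
  rw [sum_pi_prod (fun B o => c B o * if B = B₀ then f o else 1)]
  have h2 : ∀ B : γ, (∑ o, c B o * (if B = B₀ then f o else 1))
      = if B = B₀ then (∑ o, c B₀ o * f o) else 1 := by
    intro B; by_cases h : B = B₀ <;> simp [h, h1 B]
  simp_rw [h2]
  rw [Finset.prod_ite_eq' univ B₀ (fun _ => ∑ o, c B₀ o * f o)]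
  simp

lemma sum_pi_double (c : γ → κ → ℝ) (h1 : ∀ B, ∑ o, c B o = 1) {B₁ B₂ : γ} (hne : B₁ ≠ B₂)
    (f g : κ → ℝ) :
    ∑ d : γ → κ, (∏ B, c B (d B)) * (f (d B₁) * g (d B₂))
      = (∑ o, c B₁ o * f o) * (∑ o, c B₂ o * g o) := by
  have key : ∀ d : γ → κ, (∏ B, c B (d B)) * (f (d B₁) * g (d B₂))
      = ∏ B, (c B (d B) * (if B = B₁ then f (d B) else if B = B₂ then g (d B) else 1)) := by
    intro d
    rw [Finset.prod_mul_distrib]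
    congr 1
    rw [← Finset.mul_prod_erase univ _ (mem_univ B₁)]
    rw [← Finset.mul_prod_erase (univ.erase B₁) _ (Finset.mem_erase.2 ⟨hne.symm, mem_univ B₂⟩)]
    rw [if_pos rfl, if_neg hne.symm, if_pos rfl]
    have : ∏ B ∈ (univ.erase B₁).erase B₂,
        (if B = B₁ then f (d B) else if B = B₂ then g (d B) else 1) = 1 := by
      apply Finset.prod_eq_one
      intro x hx
      simp only [Finset.mem_erase] at hx
      rw [if_neg hx.2.1, if_neg hx.1]
    rw [this, mul_one, mul_comm]
  simp_rw [key]
  rw [sum_pi_prod (fun B o => c B o * if B = B₁ then f o else if B = B₂ then g o else 1)]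
  have h2 : ∀ B : γ, (∑ o, c B o * (if B = B₁ then f o else if B = B₂ then g o else 1))
      = if B = B₁ then (∑ o, c B₁ o * f o) else if B = B₂ then (∑ o, c B₂ o * g o) else 1 := by
    intro B
    by_cases h : B = B₁
    · simp [h]
    · by_cases h' : B = B₂ <;> simp [h, h', h1 B, hne.symm]
  simp_rw [h2]
  rw [← Finset.mul_prod_erase univ _ (mem_univ B₁),
    ← Finset.mul_prod_erase (univ.erase B₁) _ (Finset.mem_erase.2 ⟨hne.symm, mem_univ B₂⟩),
    if_pos rfl, if_neg hne.symm, if_pos rfl]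
  have : ∏ B ∈ (univ.erase B₁).erase B₂,
      (if B = B₁ then (∑ o, c B₁ o * f o) else if B = B₂ then (∑ o, c B₂ o * g o) else 1) = 1 := by
    apply Finset.prod_eq_one
    intro x hx
    simp only [Finset.mem_erase] at hx
    rw [if_neg hx.2.1, if_neg hx.1]
  rw [this, mul_one]

end PiLemmas
section MainAux
open scoped Classical

variable {A : Type} [Fintype A] [DecidableEq A]

abbrev RnkA (AN : Finset A) : Type := Ranking {c : A // c ∈ (ANᶜ : Finset A)}
abbrev Omeg (AN : Finset A) : Type := RnkA AN × (Finset A → Option A)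

lemma mem_fullDomain {B : Finset A} : B ∈ fullDomain A ↔ B.Nonempty := by
  simp [fullDomain]

lemma union_inter_compl (AN B : Finset A) : (B ∩ ANᶜ) ∪ (B ∩ AN) = B := by
  ext x; simp only [mem_union, mem_inter, Finset.mem_compl]; tauto

lemma disj_inter_compl (AN B : Finset A) : Disjoint (B ∩ ANᶜ) (B ∩ AN) := by
  rw [Finset.disjoint_left]
  intro x hx hx2
  simp only [mem_inter, Finset.mem_compl] at hx hx2
  exact hx.2 hx2.2

def bstScore (AN : Finset A) (r : RnkA AN) (b : A) : ℕ :=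
  if h : b ∈ (ANᶜ : Finset A) then (r ⟨b, h⟩ : ℕ) else 0

def bst (AN : Finset A) (r : RnkA AN) (D : Finset A) (hD : D.Nonempty) : A :=
  (Finset.exists_min_image D (bstScore AN r) hD).choose

lemma bst_mem (AN : Finset A) (r : RnkA AN) (D : Finset A) (hD : D.Nonempty) :
    bst AN r D hD ∈ D :=
  (Finset.exists_min_image D (bstScore AN r) hD).choose_spec.1

lemma bst_min (AN : Finset A) (r : RnkA AN) (D : Finset A) (hD : D.Nonempty) :
    ∀ b ∈ D, bstScore AN r (bst AN r D hD) ≤ bstScore AN r b :=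
  (Finset.exists_min_image D (bstScore AN r) hD).choose_spec.2

lemma bst_eq_iff (AN : Finset A) (r : RnkA AN) {D : Finset A} (hD : D.Nonempty)
    (hDA : D ⊆ (ANᶜ : Finset A)) {b : A} (hb : b ∈ D) :
    bst AN r D hD = b ↔
      ∀ b' : {c : A // c ∈ (ANᶜ : Finset A)}, (b' : A) ∈ D → (b' : A) ≠ b →
        Ranking.pref r ⟨b, hDA hb⟩ b' := by
  constructor
  · intro he b' hb' hne
    have hmin := bst_min AN r D hD _ hb'
    rw [he] at hmin
    have h1 : bstScore AN r b = (r ⟨b, hDA hb⟩ : ℕ) := by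
      rw [bstScore, dif_pos (hDA hb)]
    have h2 : bstScore AN r (b' : A) = (r b' : ℕ) := by
      rw [bstScore, dif_pos b'.2]
    rw [h1, h2] at hmin
    have hne2 : (r ⟨b, hDA hb⟩ : ℕ) ≠ (r b' : ℕ) := by
      intro hc
      apply hne
      have : (⟨b, hDA hb⟩ : {c : A // c ∈ (ANᶜ : Finset A)}) = b' := r.injective (Fin.ext hc)
      exact (congrArg Subtype.val this).symm
    have : (r ⟨b, hDA hb⟩ : ℕ) < (r b' : ℕ) := lt_of_le_of_ne hmin hne2
    exact Fin.lt_def.mpr this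
  · intro h
    rcases eq_or_ne (bst AN r D hD) b with he | hne
    · exact he
    exfalso
    have hm := bst_mem AN r D hD
    have hp := h ⟨bst AN r D hD, hDA hm⟩ hm hne
    have hmin := bst_min AN r D hD b hb
    have h1 : bstScore AN r b = (r ⟨b, hDA hb⟩ : ℕ) := by
      rw [bstScore, dif_pos (hDA hb)]
    have h2 : bstScore AN r (bst AN r D hD) = (r ⟨bst AN r D hD, hDA hm⟩ : ℕ) := by
      rw [bstScore, dif_pos (hDA hm)]
    rw [h1, h2] at hmin
    have := Fin.lt_def.mp hp
    omega

variable (AN : Finset A) (ρ : Finset A → A → ℝ)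

def ratioc (B : Finset A) (b : A) : ℝ :=
  if ρ (B ∩ ANᶜ) b = 0 then 0 else ρ B b / ρ (B ∩ ANᶜ) b

def r0c (B : Finset A) (r : RnkA AN) : ℝ :=
  if hD : (B ∩ ANᶜ).Nonempty then ratioc AN ρ B (bst AN r (B ∩ ANᶜ) hD) else 0

def Pagg (B : Finset A) : ℝ := ∑ a ∈ B ∩ AN, ρ B a

def wgt (B : Finset A) (a : A) : ℝ :=
  if hE : (B ∩ AN).Nonempty then
    (if a ∈ B ∩ AN then
      (if Pagg AN ρ B = 0 then (if a = hE.choose then 1 else 0) else ρ B a / Pagg AN ρ B)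
     else 0)
  else 0

def cw (B : Finset A) (r : RnkA AN) (o : Option A) : ℝ :=
  o.elim (if (B ∩ AN).Nonempty then r0c AN ρ B r else 1)
    (fun a => if (B ∩ AN).Nonempty then (1 - r0c AN ρ B r) * wgt AN ρ B a else 0)

lemma wgt_sum (B : Finset A) (hE : (B ∩ AN).Nonempty) : ∑ a, wgt AN ρ B a = 1 := by
  have h1 : ∀ a : A, wgt AN ρ B a = if a ∈ B ∩ AN then
      (if Pagg AN ρ B = 0 then (if a = hE.choose then 1 else 0) else ρ B a / Pagg AN ρ B)
      else 0 := by
    intro a; rw [wgt, dif_pos hE]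
  simp_rw [h1]
  rw [Finset.sum_ite_mem, Finset.univ_inter]
  by_cases hP : Pagg AN ρ B = 0
  · simp only [hP, if_true]
    rw [Finset.sum_ite_eq' (B ∩ AN) hE.choose (fun _ => (1:ℝ)), if_pos hE.choose_spec]
  · simp only [hP, if_false]
    rw [← Finset.sum_div]
    rw [Pagg] at hP ⊢
    field_simp

lemma cw_sum (B : Finset A) (r : RnkA AN) : ∑ o : Option A, cw AN ρ B r o = 1 := by
  rw [Fintype.sum_option]
  by_cases hE : (B ∩ AN).Nonempty
  · simp only [cw, Option.elim, if_pos hE]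
    rw [← Finset.mul_sum, wgt_sum AN ρ B hE]
    ring
  · simp only [cw, Option.elim, if_neg hE]
    simp

end MainAux
section Part1
open scoped Classical

variable {A : Type} [Fintype A] [DecidableEq A]
variable (AN : Finset A) (ρ : Finset A → A → ℝ)

def WOv (sA : A → ℕ) (r : RnkA AN) (B : Finset A) (hB : B.Nonempty) (o : Option A) : A :=
  o.elim
    (if hD : (B ∩ ANᶜ).Nonempty then bst AN r (B ∩ ANᶜ) hD
     else if hE : (B ∩ AN).Nonempty then (Finset.exists_min_image (B ∩ AN) sA hE).choose
     else hB.choose)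
    id

def Wv (sA : A → ℕ) (ω : Omeg AN) (B : Finset A) (hB : B.Nonempty) : A :=
  WOv AN sA ω.1 B hB (ω.2 B)

def Xv (sA : A → ℕ) (ω : Omeg AN) (B : Finset A) (a : A) : ℝ :=
  if hB : B.Nonempty then (if Wv AN sA ω B hB = a then 1 else 0) else 0

def wdist (ν : RnkA AN → ℝ) (ω : Omeg AN) : ℝ :=
  ν ω.1 * ∏ B : Finset A, cw AN ρ B ω.1 (ω.2 B)

lemma LMspec (hρ : IsSCF (fullDomain A) ρ)
    (hLM : LimitedMonoGen (ANᶜ : Finset A) AN (fullDomain A) ρ)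
    {B : Finset A} (hD : (B ∩ ANᶜ).Nonempty) {b : A} (hb : b ∈ B ∩ ANᶜ) :
    ρ B b ≤ ρ (B ∩ ANᶜ) b := by
  have hB : B.Nonempty := ⟨b, (Finset.mem_inter.1 hb).1⟩
  have := hLM (B ∩ ANᶜ) (B ∩ AN) Finset.inter_subset_right Finset.inter_subset_right
    (mem_fullDomain.2 hD) (by rw [union_inter_compl]; exact mem_fullDomain.2 hB) b hb
  rwa [union_inter_compl] at this

lemma ratioc_mul (hρ : IsSCF (fullDomain A) ρ)
    (hLM : LimitedMonoGen (ANᶜ : Finset A) AN (fullDomain A) ρ)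
    {B : Finset A} (hD : (B ∩ ANᶜ).Nonempty) {b : A} (hb : b ∈ B ∩ ANᶜ) :
    ratioc AN ρ B b * ρ (B ∩ ANᶜ) b = ρ B b := by
  have hbB : b ∈ B := (Finset.mem_inter.1 hb).1
  by_cases h : ρ (B ∩ ANᶜ) b = 0
  · rw [ratioc, if_pos h, h, mul_zero]
    have h1 : ρ B b ≤ 0 := (LMspec AN ρ hρ hLM hD hb).trans_eq h
    have h2 : 0 ≤ ρ B b := (hρ B (mem_fullDomain.2 ⟨b, hbB⟩)).1 b hbB
    linarith
  · rw [ratioc, if_neg h]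
    field_simp

lemma r0c_nonneg (hρ : IsSCF (fullDomain A) ρ) (B : Finset A) (r : RnkA AN) :
    0 ≤ r0c AN ρ B r := by
  rw [r0c]
  split
  · next hD =>
    have hbm := bst_mem AN r (B ∩ ANᶜ) hD
    rw [ratioc]
    split
    · exact le_refl 0
    · next h =>
      have hbB : bst AN r (B ∩ ANᶜ) hD ∈ B := (Finset.mem_inter.1 hbm).1
      exact div_nonneg ((hρ B (mem_fullDomain.2 ⟨_, hbB⟩)).1 _ hbB)
        ((hρ (B ∩ ANᶜ) (mem_fullDomain.2 hD)).1 _ hbm)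
  · exact le_refl 0

lemma r0c_le_one (hρ : IsSCF (fullDomain A) ρ)
    (hLM : LimitedMonoGen (ANᶜ : Finset A) AN (fullDomain A) ρ)
    (B : Finset A) (r : RnkA AN) : r0c AN ρ B r ≤ 1 := by
  rw [r0c]
  split
  · next hD =>
    have hbm := bst_mem AN r (B ∩ ANᶜ) hD
    rw [ratioc]
    split
    · exact zero_le_one
    · next h =>
      have h3 : 0 ≤ ρ (B ∩ ANᶜ) (bst AN r (B ∩ ANᶜ) hD) :=
        (hρ (B ∩ ANᶜ) (mem_fullDomain.2 hD)).1 _ hbm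
      exact div_le_one_of_le₀ (LMspec AN ρ hρ hLM hD hbm) h3
  · exact zero_le_one

lemma wgt_nonneg (hρ : IsSCF (fullDomain A) ρ) (B : Finset A) (a : A) :
    0 ≤ wgt AN ρ B a := by
  rw [wgt]
  split
  · next hE =>
    split
    · next haE =>
      have haB : a ∈ B := (Finset.mem_inter.1 haE).1
      have h2 : 0 ≤ ρ B a := (hρ B (mem_fullDomain.2 ⟨a, haB⟩)).1 a haB
      have hP : 0 ≤ Pagg AN ρ B := by
        rw [Pagg]
        apply Finset.sum_nonneg
        intro x hx
        exact (hρ B (mem_fullDomain.2 ⟨a, haB⟩)).1 x (Finset.mem_inter.1 hx).1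
      split
      · split <;> norm_num
      · exact div_nonneg h2 hP
    · exact le_refl 0
  · exact le_refl 0

lemma cw_nonneg (hρ : IsSCF (fullDomain A) ρ)
    (hLM : LimitedMonoGen (ANᶜ : Finset A) AN (fullDomain A) ρ)
    (B : Finset A) (r : RnkA AN) (o : Option A) : 0 ≤ cw AN ρ B r o := by
  cases o with
  | none =>
    show (0:ℝ) ≤ if (B ∩ AN).Nonempty then r0c AN ρ B r else 1
    split
    · exact r0c_nonneg AN ρ hρ B r
    · exact zero_le_one
  | some a =>
    show (0:ℝ) ≤ if (B ∩ AN).Nonempty then (1 - r0c AN ρ B r) * wgt AN ρ B a else 0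
    split
    · exact mul_nonneg (by linarith [r0c_le_one AN ρ hρ hLM B r]) (wgt_nonneg AN ρ hρ B a)
    · exact le_refl 0

lemma cw_some_ne_zero {B : Finset A} {r : RnkA AN} {a : A}
    (h : cw AN ρ B r (some a) ≠ 0) : a ∈ B ∩ AN := by
  by_contra hm
  apply h
  show (if (B ∩ AN).Nonempty then (1 - r0c AN ρ B r) * wgt AN ρ B a else 0) = 0
  by_cases hE : (B ∩ AN).Nonempty
  · rw [if_pos hE]
    have : wgt AN ρ B a = 0 := by rw [wgt, dif_pos hE, if_neg hm]
    rw [this, mul_zero]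
  · rw [if_neg hE]

lemma sum_bst (ν : RnkA AN → ℝ)
    (hPR' : ∀ B ∈ fullDomain A, ∀ (hBs : B ⊆ (ANᶜ : Finset A)), ∀ a, ∀ (ha : a ∈ B),
      ρ B a = probOf ν (fun rr =>
        ∀ b : {c : A // c ∈ (ANᶜ : Finset A)}, (b : A) ∈ B → (b : A) ≠ a →
          Ranking.pref rr ⟨a, hBs ha⟩ b))
    {D : Finset A} (hD : D.Nonempty) (hDA : D ⊆ (ANᶜ : Finset A)) (f : A → ℝ) :
    ∑ r, ν r * f (bst AN r D hD) = ∑ b ∈ D, f b * ρ D b := by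
  have key : ∀ r : RnkA AN, ν r * f (bst AN r D hD)
      = ∑ b ∈ D, (if bst AN r D hD = b then ν r * f b else 0) := by
    intro r
    rw [Finset.sum_ite_eq D (bst AN r D hD) (fun b => ν r * f b),
      if_pos (bst_mem AN r D hD)]
  simp_rw [key]
  rw [Finset.sum_comm]
  apply Finset.sum_congr rfl
  intro b hb
  rw [hPR' D (mem_fullDomain.2 hD) hDA b hb, probOf, Finset.mul_sum]
  apply Finset.sum_congr rfl
  intro r _
  have hiff := bst_eq_iff AN r hD hDA hb
  by_cases hc : bst AN r D hD = b
  · rw [if_pos hc, if_pos (hiff.1 hc)]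
    ring
  · rw [if_neg hc, if_neg (fun hp => hc (hiff.2 hp)), mul_zero]

lemma hOne (ν : RnkA AN → ℝ) (sA : A → ℕ) (hρ : IsSCF (fullDomain A) ρ)
    (hLM : LimitedMonoGen (ANᶜ : Finset A) AN (fullDomain A) ρ)
    (hν : IsDistr ν)
    (hPR' : ∀ B ∈ fullDomain A, ∀ (hBs : B ⊆ (ANᶜ : Finset A)), ∀ a, ∀ (ha : a ∈ B),
      ρ B a = probOf ν (fun rr =>
        ∀ b : {c : A // c ∈ (ANᶜ : Finset A)}, (b : A) ∈ B → (b : A) ≠ a →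
          Ranking.pref rr ⟨a, hBs ha⟩ b))
    {B : Finset A} (hB : B.Nonempty) {a : A} (ha : a ∈ B) :
    ∑ ω : Omeg AN, wdist AN ρ ν ω * Xv AN sA ω B a = ρ B a := by
  have hBD := mem_fullDomain.2 hB
  have hsplit : ∑ b ∈ B ∩ ANᶜ, ρ B b + ∑ a' ∈ B ∩ AN, ρ B a' = 1 := by
    rw [← Finset.sum_union (disj_inter_compl AN B), union_inter_compl]
    exact (hρ B hBD).2.1
  have main : ∑ ω : Omeg AN, wdist AN ρ ν ω * Xv AN sA ω B a
      = ∑ r, ν r * ((cw AN ρ B r none) * (if WOv AN sA r B hB none = a then 1 else 0)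
          + cw AN ρ B r (some a)) := by
    rw [Fintype.sum_prod_type]
    apply Finset.sum_congr rfl
    intro r _
    have e1 : ∀ d : Finset A → Option A,
        wdist AN ρ ν (r, d) * Xv AN sA (r, d) B a
        = ν r * ((∏ B', cw AN ρ B' r (d B')) *
            (if WOv AN sA r B hB (d B) = a then 1 else 0)) := by
      intro d
      rw [Xv, dif_pos hB]
      exact mul_assoc _ _ _
    rw [Finset.sum_congr rfl (fun d _ => e1 d), ← Finset.mul_sum,
      sum_pi_single (fun B' o => cw AN ρ B' r o) (fun B' => cw_sum AN ρ B' r) B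
        (fun o => if WOv AN sA r B hB o = a then 1 else 0)]
    congr 1
    rw [Fintype.sum_option]
    congr 1
    have e2 : ∀ a' : A, cw AN ρ B r (some a') *
        (if WOv AN sA r B hB (some a') = a then 1 else 0)
        = if a' = a then cw AN ρ B r (some a') else 0 := by
      intro a'
      show cw AN ρ B r (some a') * (if a' = a then (1:ℝ) else 0) = _
      by_cases h : a' = a <;> simp [h]
    rw [Finset.sum_congr rfl (fun a' _ => e2 a'),
      Finset.sum_ite_eq' Finset.univ a (fun a' => cw AN ρ B r (some a')),
      if_pos (Finset.mem_univ a)]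
  rw [main]
  by_cases haN : a ∈ AN
  · have haE : a ∈ B ∩ AN := Finset.mem_inter.2 ⟨ha, haN⟩
    have hEE : (B ∩ AN).Nonempty := ⟨a, haE⟩
    have hcw : ∀ r, cw AN ρ B r (some a) = (1 - r0c AN ρ B r) * wgt AN ρ B a := by
      intro r
      show (if (B ∩ AN).Nonempty then (1 - r0c AN ρ B r) * wgt AN ρ B a else 0) = _
      rw [if_pos hEE]
    by_cases hD : (B ∩ ANᶜ).Nonempty
    · have hind : ∀ r : RnkA AN, (if WOv AN sA r B hB none = a then (1:ℝ) else 0) = 0 := by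
        intro r
        rw [if_neg]
        intro hc
        have hm : WOv AN sA r B hB none ∈ B ∩ ANᶜ := by
          show Option.elim none _ _ ∈ _
          simp only [Option.elim]
          rw [dif_pos hD]
          exact bst_mem AN r (B ∩ ANᶜ) hD
        rw [hc] at hm
        exact (Finset.mem_compl.1 (Finset.mem_inter.1 hm).2) haN
      simp_rw [hind, mul_zero, zero_add, hcw]
      have hQ : ∑ r, ν r * r0c AN ρ B r = ∑ b ∈ B ∩ ANᶜ, ρ B b := by
        have e3 : ∀ r : RnkA AN, ν r * r0c AN ρ B r
            = ν r * ratioc AN ρ B (bst AN r (B ∩ ANᶜ) hD) := by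
          intro r; rw [r0c, dif_pos hD]
        simp_rw [e3]
        rw [sum_bst AN ρ ν hPR' hD Finset.inter_subset_right (ratioc AN ρ B)]
        apply Finset.sum_congr rfl
        intro b hb
        exact ratioc_mul AN ρ hρ hLM hD hb
      have e4 : ∀ r : RnkA AN, ν r * ((1 - r0c AN ρ B r) * wgt AN ρ B a)
          = ν r * wgt AN ρ B a - (ν r * r0c AN ρ B r) * wgt AN ρ B a := by
        intro r; ring
      simp_rw [e4]
      rw [Finset.sum_sub_distrib, ← Finset.sum_mul, ← Finset.sum_mul, hν.2, hQ]
      have hP : (1 : ℝ) - ∑ b ∈ B ∩ ANᶜ, ρ B b = Pagg AN ρ B := by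
        rw [Pagg]; linarith [hsplit]
      rw [show (1 : ℝ) * wgt AN ρ B a - (∑ b ∈ B ∩ ANᶜ, ρ B b) * wgt AN ρ B a
        = ((1 : ℝ) - ∑ b ∈ B ∩ ANᶜ, ρ B b) * wgt AN ρ B a by ring, hP]
      by_cases hP0 : Pagg AN ρ B = 0
      · rw [hP0, zero_mul]
        have : ∀ x ∈ B ∩ AN, ρ B x = 0 := by
          have hnn : ∀ x ∈ B ∩ AN, 0 ≤ ρ B x := fun x hx =>
            (hρ B hBD).1 x (Finset.mem_inter.1 hx).1
          intro x hx
          exact (Finset.sum_eq_zero_iff_of_nonneg hnn).1 hP0 x hx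
        exact (this a haE).symm
      · rw [wgt, dif_pos hEE, if_pos haE, if_neg hP0]
        field_simp
    · have hBE : B ∩ AN = B := by
        have h := union_inter_compl AN B
        rw [Finset.not_nonempty_iff_eq_empty.1 hD, Finset.empty_union] at h
        exact h
      have hr0 : ∀ r : RnkA AN, r0c AN ρ B r = 0 := fun r => dif_neg hD
      have hcwn : ∀ r : RnkA AN, cw AN ρ B r none = 0 := by
        intro r
        show (if (B ∩ AN).Nonempty then r0c AN ρ B r else 1) = 0
        rw [if_pos hEE, hr0]
      simp_rw [hcwn, zero_mul, zero_add, hcw, hr0, sub_zero, one_mul, ← Finset.sum_mul, hν.2,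
        one_mul]
      have hPagg : Pagg AN ρ B = 1 := by
        rw [Pagg, hBE]; exact (hρ B hBD).2.1
      rw [wgt, dif_pos hEE, if_pos haE, if_neg (by rw [hPagg]; norm_num), hPagg, div_one]
  · have haD : a ∈ B ∩ ANᶜ := Finset.mem_inter.2 ⟨ha, Finset.mem_compl.2 haN⟩
    have hD : (B ∩ ANᶜ).Nonempty := ⟨a, haD⟩
    have hcwsome : ∀ r : RnkA AN, cw AN ρ B r (some a) = 0 := by
      intro r
      show (if (B ∩ AN).Nonempty then (1 - r0c AN ρ B r) * wgt AN ρ B a else 0) = 0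
      by_cases hEE : (B ∩ AN).Nonempty
      · rw [if_pos hEE]
        have : wgt AN ρ B a = 0 := by
          rw [wgt, dif_pos hEE, if_neg (fun hc => haN (Finset.mem_inter.1 hc).2)]
        rw [this, mul_zero]
      · exact if_neg hEE
    have hWO : ∀ r : RnkA AN, WOv AN sA r B hB none = bst AN r (B ∩ ANᶜ) hD := by
      intro r
      show Option.elim none _ _ = _
      simp only [Option.elim]
      rw [dif_pos hD]
    simp_rw [hcwsome, add_zero, hWO]
    by_cases hEE : (B ∩ AN).Nonempty
    · have hcwn : ∀ r : RnkA AN, cw AN ρ B r none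
          = ratioc AN ρ B (bst AN r (B ∩ ANᶜ) hD) := by
        intro r
        show (if (B ∩ AN).Nonempty then r0c AN ρ B r else 1) = _
        rw [if_pos hEE, r0c, dif_pos hD]
      simp_rw [hcwn]
      have hsb := sum_bst AN ρ ν hPR' hD Finset.inter_subset_right
        (fun b => ratioc AN ρ B b * (if b = a then 1 else 0))
      calc ∑ r, ν r * (ratioc AN ρ B (bst AN r (B ∩ ANᶜ) hD) *
            (if bst AN r (B ∩ ANᶜ) hD = a then (1:ℝ) else 0))
          = ∑ b ∈ B ∩ ANᶜ, (ratioc AN ρ B b * (if b = a then 1 else 0)) * ρ (B ∩ ANᶜ) b := hsb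
        _ = ρ B a := by
            rw [Finset.sum_eq_single a]
            · rw [if_pos rfl, mul_one]
              exact ratioc_mul AN ρ hρ hLM hD haD
            · intro b _ hbne
              rw [if_neg hbne, mul_zero, zero_mul]
            · intro hcon
              exact absurd haD hcon
    · have hcwn : ∀ r : RnkA AN, cw AN ρ B r none = 1 := by
        intro r
        show (if (B ∩ AN).Nonempty then r0c AN ρ B r else 1) = 1
        rw [if_neg hEE]
      simp_rw [hcwn, one_mul]
      have hsb := sum_bst AN ρ ν hPR' hD Finset.inter_subset_right
        (fun b => if b = a then (1:ℝ) else 0)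
      calc ∑ r, ν r * (if bst AN r (B ∩ ANᶜ) hD = a then (1:ℝ) else 0)
          = ∑ b ∈ B ∩ ANᶜ, (if b = a then (1:ℝ) else 0) * ρ (B ∩ ANᶜ) b := hsb
        _ = ρ B a := by
            have hDB : B ∩ ANᶜ = B := by
              have h := union_inter_compl AN B
              rw [Finset.not_nonempty_iff_eq_empty.1 hEE, Finset.union_empty] at h
              exact h
            rw [Finset.sum_eq_single a]
            · rw [if_pos rfl, one_mul, hDB]
            · intro b _ hbne
              rw [if_neg hbne, zero_mul]
            · intro hcon
              exact absurd haD hcon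

end Part1
section Part2
open scoped Classical

variable {A : Type} [Fintype A] [DecidableEq A]
variable (AN : Finset A) (ρ : Finset A → A → ℝ)

lemma Xv_sq (sA : A → ℕ) (ω : Omeg AN) (B : Finset A) (a : A) :
    Xv AN sA ω B a * Xv AN sA ω B a = Xv AN sA ω B a := by
  rw [Xv]
  split
  · split <;> norm_num
  · norm_num

lemma hSel (ν : RnkA AN → ℝ) (sA : A → ℕ) (hρ : IsSCF (fullDomain A) ρ)
    (hLM : LimitedMonoGen (ANᶜ : Finset A) AN (fullDomain A) ρ)
    (hν : IsDistr ν)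
    (hPR' : ∀ B ∈ fullDomain A, ∀ (hBs : B ⊆ (ANᶜ : Finset A)), ∀ a, ∀ (ha : a ∈ B),
      ρ B a = probOf ν (fun rr =>
        ∀ b : {c : A // c ∈ (ANᶜ : Finset A)}, (b : A) ∈ B → (b : A) ≠ a →
          Ranking.pref rr ⟨a, hBs ha⟩ b))
    (M : ℕ) (hM : 0 < M) :
    ∃ tt : Fin M → Omeg AN,
      (∀ k, wdist AN ρ ν (tt k) ≠ 0) ∧
      ∑ B ∈ fullDomain A, ∑ a ∈ B,
          (ρ B a - (M : ℝ)⁻¹ * ∑ k, Xv AN sA (tt k) B a) ^ 2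
        ≤ ((fullDomain A).card : ℝ) / M := by
  set w : Omeg AN → ℝ := wdist AN ρ ν with hwdef
  have hMR : (0 : ℝ) < (M : ℝ) := by exact_mod_cast hM
  have hw0 : ∀ ω, 0 ≤ w ω := fun ω =>
    mul_nonneg (hν.1 ω.1) (Finset.prod_nonneg fun B _ => cw_nonneg AN ρ hρ hLM B ω.1 (ω.2 B))
  have hw1 : ∑ ω, w ω = 1 := by
    rw [Fintype.sum_prod_type]
    have e1 : ∀ r : RnkA AN, ∑ d : Finset A → Option A, w (r, d) = ν r := by
      intro r
      show ∑ d : Finset A → Option A, ν r * ∏ B, cw AN ρ B r (d B) = ν r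
      rw [← Finset.mul_sum, sum_pi_prod (fun B o => cw AN ρ B r o)]
      have : ∀ B : Finset A, ∑ o, cw AN ρ B r o = 1 := fun B => cw_sum AN ρ B r
      simp [this]
    rw [Finset.sum_congr rfl (fun r _ => e1 r)]
    exact hν.2
  set WM : (Fin M → Omeg AN) → ℝ := fun tv => ∏ k, w (tv k) with hWMdef
  have hWM0 : ∀ tv, 0 ≤ WM tv := fun tv => Finset.prod_nonneg fun k _ => hw0 (tv k)
  have hWM1 : ∑ tv, WM tv = 1 := by
    rw [hWMdef]
    rw [sum_pi_prod (fun _ ω => w ω)]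
    simp [hw1]
  have E1 : ∀ (k : Fin M) (f : Omeg AN → ℝ),
      ∑ tv, WM tv * f (tv k) = ∑ ω, w ω * f ω :=
    fun k f => sum_pi_single (fun _ ω => w ω) (fun _ => hw1) k f
  have E2 : ∀ {k l : Fin M}, k ≠ l → ∀ (f g : Omeg AN → ℝ),
      ∑ tv, WM tv * (f (tv k) * g (tv l)) = (∑ ω, w ω * f ω) * (∑ ω, w ω * g ω) :=
    fun hkl f g => sum_pi_double (fun _ ω => w ω) (fun _ => hw1) hkl f g
  -- per-coordinate second moment bound
  have coord : ∀ B ∈ fullDomain A, ∀ a ∈ B,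
      ∑ tv, WM tv * (ρ B a - (M : ℝ)⁻¹ * ∑ k, Xv AN sA (tv k) B a) ^ 2
        ≤ ρ B a / M := by
    intro B hBD a ha
    have hB : B.Nonempty := mem_fullDomain.1 hBD
    set p : ℝ := ρ B a with hpdef
    have hp : ∑ ω, w ω * Xv AN sA ω B a = p := hOne AN ρ ν sA hρ hLM hν hPR' hB ha
    have hp0 : 0 ≤ p := (hρ B hBD).1 a ha
    set s : (Fin M → Omeg AN) → ℝ := fun tv => ∑ k, Xv AN sA (tv k) B a with hsdef
    have hs1 : ∑ tv, WM tv * s tv = M * p := by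
      have e : ∀ tv, WM tv * s tv = ∑ k, WM tv * Xv AN sA (tv k) B a := by
        intro tv; rw [hsdef]; exact Finset.mul_sum _ _ _
      rw [Finset.sum_congr rfl (fun tv _ => e tv), Finset.sum_comm]
      have e2 : ∀ k : Fin M, ∑ tv, WM tv * Xv AN sA (tv k) B a = p := by
        intro k; rw [E1 k (fun ω => Xv AN sA ω B a), hp]
      rw [Finset.sum_congr rfl (fun k _ => e2 k)]
      simp [mul_comm]
    have hs2 : ∑ tv, WM tv * (s tv * s tv) = M * p + (M * M - M) * (p * p) := by
      have e : ∀ tv, WM tv * (s tv * s tv)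
          = ∑ k, ∑ l, WM tv * (Xv AN sA (tv k) B a * Xv AN sA (tv l) B a) := by
        intro tv
        rw [hsdef]
        rw [Finset.sum_mul_sum]
        rw [Finset.mul_sum]
        apply Finset.sum_congr rfl
        intro k _
        rw [Finset.mul_sum]
      rw [Finset.sum_congr rfl (fun tv _ => e tv), Finset.sum_comm]
      have e2 : ∀ k : Fin M,
          ∑ tv, ∑ l, WM tv * (Xv AN sA (tv k) B a * Xv AN sA (tv l) B a)
          = ∑ l, ∑ tv, WM tv * (Xv AN sA (tv k) B a * Xv AN sA (tv l) B a) :=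
        fun k => Finset.sum_comm
      rw [Finset.sum_congr rfl (fun k _ => e2 k)]
      have e3 : ∀ k l : Fin M,
          ∑ tv, WM tv * (Xv AN sA (tv k) B a * Xv AN sA (tv l) B a)
          = if l = k then p else p * p := by
        intro k l
        by_cases hkl : l = k
        · subst hkl
          rw [if_pos rfl]
          have : ∀ tv : Fin M → Omeg AN,
              WM tv * (Xv AN sA (tv l) B a * Xv AN sA (tv l) B a)
              = WM tv * Xv AN sA (tv l) B a := by
            intro tv; rw [Xv_sq]
          rw [Finset.sum_congr rfl (fun tv _ => this tv),
            E1 l (fun ω => Xv AN sA ω B a), hp]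
        · rw [if_neg hkl,
            E2 (fun h => hkl h.symm) (fun ω => Xv AN sA ω B a) (fun ω => Xv AN sA ω B a),
            hp]
      have e4 : ∀ k : Fin M,
          ∑ l, (if l = k then p else p * p) = p * p * M + (p - p * p) := by
        intro k
        have : ∀ l : Fin M, (if l = k then p else p * p)
            = p * p + (if l = k then p - p * p else 0) := by
          intro l; by_cases h : l = k <;> simp [h]
        rw [Finset.sum_congr rfl (fun l _ => this l), Finset.sum_add_distrib,
          Finset.sum_const, Finset.sum_ite_eq' Finset.univ k (fun _ => p - p * p),
          if_pos (Finset.mem_univ k), Finset.card_univ, Fintype.card_fin]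
        push_cast
        ring
      calc ∑ k : Fin M, ∑ l, ∑ tv, WM tv * (Xv AN sA (tv k) B a * Xv AN sA (tv l) B a)
          = ∑ k : Fin M, (p * p * M + (p - p * p)) := by
            apply Finset.sum_congr rfl
            intro k _
            rw [Finset.sum_congr rfl (fun l _ => e3 k l)]
            exact e4 k
        _ = M * p + (M * M - M) * (p * p) := by
            rw [Finset.sum_const, Finset.card_univ, Fintype.card_fin]
            push_cast
            ring
    have expand : ∀ tv, WM tv * (p - (M : ℝ)⁻¹ * s tv) ^ 2
        = p ^ 2 * WM tv - 2 * p * (M : ℝ)⁻¹ * (WM tv * s tv)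
          + (M : ℝ)⁻¹ * (M : ℝ)⁻¹ * (WM tv * (s tv * s tv)) := by
      intro tv; ring
    rw [Finset.sum_congr rfl (fun tv _ => expand tv)]
    rw [Finset.sum_add_distrib, Finset.sum_sub_distrib, ← Finset.mul_sum, ← Finset.mul_sum,
      ← Finset.mul_sum, hWM1, hs1, hs2, mul_one]
    have heq : p ^ 2 - 2 * p * (M : ℝ)⁻¹ * ((M : ℝ) * p)
        + (M : ℝ)⁻¹ * (M : ℝ)⁻¹ * ((M : ℝ) * p + ((M : ℝ) * (M : ℝ) - (M : ℝ)) * (p * p))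
        = (p - p ^ 2) / (M : ℝ) := by
      field_simp
      ring
    rw [heq]
    have hle : p - p ^ 2 ≤ p := by nlinarith [sq_nonneg p]
    exact (div_le_div_iff_of_pos_right hMR).2 hle
  set bound : ℝ := ((fullDomain A).card : ℝ) / M with hbdef
  have total : ∑ tv, WM tv * (∑ B ∈ fullDomain A, ∑ a ∈ B,
      (ρ B a - (M : ℝ)⁻¹ * ∑ k, Xv AN sA (tv k) B a) ^ 2) ≤ bound := by
    have e1 : ∀ tv : Fin M → Omeg AN,
        WM tv * (∑ B ∈ fullDomain A, ∑ a ∈ B,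
          (ρ B a - (M : ℝ)⁻¹ * ∑ k, Xv AN sA (tv k) B a) ^ 2)
        = ∑ B ∈ fullDomain A, ∑ a ∈ B,
            WM tv * (ρ B a - (M : ℝ)⁻¹ * ∑ k, Xv AN sA (tv k) B a) ^ 2 := by
      intro tv
      rw [Finset.mul_sum]
      exact Finset.sum_congr rfl fun B _ => Finset.mul_sum _ _ _
    rw [Finset.sum_congr rfl fun tv _ => e1 tv, Finset.sum_comm]
    have e2 : ∀ B ∈ fullDomain A,
        (∑ tv : Fin M → Omeg AN, ∑ a ∈ B,
          WM tv * (ρ B a - (M : ℝ)⁻¹ * ∑ k, Xv AN sA (tv k) B a) ^ 2)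
        = ∑ a ∈ B, ∑ tv : Fin M → Omeg AN,
            WM tv * (ρ B a - (M : ℝ)⁻¹ * ∑ k, Xv AN sA (tv k) B a) ^ 2 :=
      fun B _ => Finset.sum_comm
    rw [Finset.sum_congr rfl e2]
    calc ∑ B ∈ fullDomain A, ∑ a ∈ B, ∑ tv, WM tv *
            (ρ B a - (M : ℝ)⁻¹ * ∑ k, Xv AN sA (tv k) B a) ^ 2
        ≤ ∑ B ∈ fullDomain A, ∑ a ∈ B, ρ B a / M :=
          Finset.sum_le_sum (fun B hB => Finset.sum_le_sum (fun a ha => coord B hB a ha))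
      _ = ∑ B ∈ fullDomain A, (1 : ℝ) / M :=
          Finset.sum_congr rfl (fun B hB => by rw [← Finset.sum_div, (hρ B hB).2.1])
      _ = bound := by
          rw [Finset.sum_const, nsmul_eq_mul, hbdef]
          ring
  by_contra hcon
  push_neg at hcon
  obtain ⟨tv0, -, htv0⟩ : ∃ tv ∈ Finset.univ, WM tv ≠ 0 :=
    Finset.exists_ne_zero_of_sum_ne_zero (by rw [hWM1]; norm_num)
  have hlt : ∑ tv, WM tv * bound < ∑ tv, WM tv * (∑ B ∈ fullDomain A, ∑ a ∈ B,
      (ρ B a - (M : ℝ)⁻¹ * ∑ k, Xv AN sA (tv k) B a) ^ 2) := by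
    apply Finset.sum_lt_sum
    · intro tv _
      by_cases h : WM tv = 0
      · rw [h]; simp
      · have hFt := hcon tv (fun k => (Finset.prod_ne_zero_iff.1 h) k (Finset.mem_univ k))
        exact le_of_lt (mul_lt_mul_of_pos_left hFt (lt_of_le_of_ne (hWM0 tv) (Ne.symm h)))
    · refine ⟨tv0, Finset.mem_univ tv0, ?_⟩
      have hFt := hcon tv0 (fun k => (Finset.prod_ne_zero_iff.1 htv0) k (Finset.mem_univ k))
      exact mul_lt_mul_of_pos_left hFt (lt_of_le_of_ne (hWM0 tv0) (Ne.symm htv0))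
  rw [← Finset.sum_mul, hWM1, one_mul] at hlt
  linarith

end Part2
section Part3
open scoped Classical

variable {A 𝒳 : Type} [Fintype A] [DecidableEq A] [Fintype 𝒳] [DecidableEq 𝒳]

abbrev TT (AN : Finset A) (n : ℕ) : Type :=
  {b : A // b ∈ (ANᶜ : Finset A)} ⊕ ({a : A // a ∈ AN} × Fin n)

variable (AN : Finset A) (n : ℕ)

/-- tag of an element of `TT`. -/
def tagT : TT AN n → A := Sum.elim (fun b => (b : A)) (fun p => (p.1 : A))

variable (ι : TT AN n ↪ 𝒳)

def sAgg (hn : 0 < n) : A → ℕ := fun a =>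
  if h : a ∈ AN then ((Fintype.equivFin 𝒳) (ι (Sum.inr (⟨a, h⟩, ⟨0, hn⟩))) : ℕ) else 0

def XcorrX : A → Finset 𝒳 := fun a =>
  if h : a ∈ AN then (Finset.univ : Finset (Fin n)).image (fun j => ι (Sum.inr (⟨a, h⟩, j)))
  else {ι (Sum.inl ⟨a, Finset.mem_compl.2 h⟩)}

lemma exists_of_mem_X {a : A} {x : 𝒳} (hx : x ∈ XcorrX AN n ι a) :
    ∃ t : TT AN n, ι t = x ∧ tagT AN n t = a := by
  rw [XcorrX] at hx
  split at hx
  · next h =>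
    obtain ⟨j, _, hj⟩ := Finset.mem_image.1 hx
    exact ⟨Sum.inr (⟨a, h⟩, j), hj, rfl⟩
  · next h =>
    exact ⟨Sum.inl ⟨a, Finset.mem_compl.2 h⟩, (Finset.mem_singleton.1 hx).symm, rfl⟩

lemma XcorrX_disj : ∀ a b : A, a ≠ b → Disjoint (XcorrX AN n ι a) (XcorrX AN n ι b) := by
  intro a b hab
  rw [Finset.disjoint_left]
  intro x hxa hxb
  obtain ⟨t1, ht1, htag1⟩ := exists_of_mem_X AN n ι hxa
  obtain ⟨t2, ht2, htag2⟩ := exists_of_mem_X AN n ι hxb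
  have : t1 = t2 := ι.injective (ht1.trans ht2.symm)
  exact hab (htag1 ▸ htag2 ▸ this ▸ rfl)

lemma XcorrX_card_AN {a : A} (h : a ∈ AN) : (XcorrX AN n ι a).card = n := by
  rw [XcorrX, dif_pos h, Finset.card_image_of_injective _
    (fun j j' hjj => congrArg Prod.snd (Sum.inr.inj (ι.injective hjj)))]
  simp

lemma XcorrX_card_atom {a : A} (h : a ∉ AN) : (XcorrX AN n ι a).card = 1 := by
  rw [XcorrX, dif_neg h, Finset.card_singleton]

variable (tv : Fin (n - 1) → Omeg AN)

def lvI (k : Fin (n - 1)) : Fin n := ⟨k.1 + 1, by omega⟩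

def SStar (hn : 0 < n) (B : Finset A) : A → Finset 𝒳 := fun a =>
  if h : a ∈ AN then
    insert (ι (Sum.inr (⟨a, h⟩, ⟨0, hn⟩)))
      ((Finset.univ.filter (fun k : Fin (n - 1) => (tv k).2 B = some a)).image
        (fun k => ι (Sum.inr (⟨a, h⟩, lvI n k))))
  else {ι (Sum.inl ⟨a, Finset.mem_compl.2 h⟩)}

lemma mem_SStar_AN (hn : 0 < n) {B : Finset A} {a : A} (h : a ∈ AN) {x : 𝒳} :
    x ∈ SStar AN n ι tv hn B a ↔
      x = ι (Sum.inr (⟨a, h⟩, ⟨0, hn⟩)) ∨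
        ∃ k : Fin (n - 1), (tv k).2 B = some a ∧ x = ι (Sum.inr (⟨a, h⟩, lvI n k)) := by
  rw [SStar, dif_pos h]
  simp only [Finset.mem_insert, Finset.mem_image, Finset.mem_filter, Finset.mem_univ, true_and]
  constructor
  · rintro (h1 | ⟨k, hk1, hk2⟩)
    · exact Or.inl h1
    · exact Or.inr ⟨k, hk1, hk2.symm⟩
  · rintro (h1 | ⟨k, hk1, hk2⟩)
    · exact Or.inl h1
    · exact Or.inr ⟨k, hk1, hk2.symm⟩

lemma mem_SStar_atom (hn : 0 < n) {B : Finset A} {a : A} (h : a ∉ AN) {x : 𝒳} :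
    x ∈ SStar AN n ι tv hn B a ↔ x = ι (Sum.inl ⟨a, Finset.mem_compl.2 h⟩) := by
  rw [SStar, dif_neg h, Finset.mem_singleton]

def scT (k : Fin (n - 1)) : TT AN n → ℕ
  | Sum.inl b => 1 + ((tv k).1 b : ℕ)
  | Sum.inr (_, j) =>
      if (j : ℕ) = k.1 + 1 then 0
      else if (j : ℕ) = 0 then 2 + (ANᶜ : Finset A).card
      else 3 + (ANᶜ : Finset A).card

def Csc (k : Fin (n - 1)) : 𝒳 → ℕ := fun x =>
  if h : ∃ t : TT AN n, ι t = x then scT AN n tv k h.choose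
  else 4 + (ANᶜ : Finset A).card

lemma Csc_apply (k : Fin (n - 1)) (t : TT AN n) :
    Csc AN n ι tv k (ι t) = scT AN n tv k t := by
  have hex : ∃ t' : TT AN n, ι t' = ι t := ⟨t, rfl⟩
  rw [Csc, dif_pos hex]
  congr 1
  exact ι.injective hex.choose_spec

def gsc (k : Fin (n - 1)) : 𝒳 → ℕ := fun x =>
  Csc AN n ι tv k x * Fintype.card 𝒳 + ((Fintype.equivFin 𝒳) x : ℕ)

lemma gsc_inj (k : Fin (n - 1)) : Function.Injective (gsc AN n ι tv k) := by
  intro x y h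
  simp only [gsc] at h
  have hx : ((Fintype.equivFin 𝒳) x : ℕ) < Fintype.card 𝒳 := Fin.is_lt _
  have hy : ((Fintype.equivFin 𝒳) y : ℕ) < Fintype.card 𝒳 := Fin.is_lt _
  have key : ∀ c1 c2 e1 e2 N : ℕ, e1 < N → e2 < N → c1 * N + e1 = c2 * N + e2 → e1 = e2 := by
    intro c1 c2 e1 e2 N h1 h2 h3
    rcases Nat.lt_trichotomy c1 c2 with hlt | heq | hgt
    · exfalso
      have : c1 * N + e1 < c2 * N := by
        calc c1 * N + e1 < c1 * N + N := by omega
          _ = (c1 + 1) * N := by ring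
          _ ≤ c2 * N := Nat.mul_le_mul_right _ hlt
      omega
    · subst heq; omega
    · exfalso
      have : c2 * N + e2 < c1 * N := by
        calc c2 * N + e2 < c2 * N + N := by omega
          _ = (c2 + 1) * N := by ring
          _ ≤ c1 * N := Nat.mul_le_mul_right _ hgt
      omega
  exact (Fintype.equivFin 𝒳).injective (Fin.ext (key _ _ _ _ _ hx hy h))

lemma gsc_lt_of_C_lt (k : Fin (n - 1)) {x y : 𝒳}
    (h : Csc AN n ι tv k x < Csc AN n ι tv k y) :
    gsc AN n ι tv k x < gsc AN n ι tv k y := by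
  have hx : ((Fintype.equivFin 𝒳) x : ℕ) < Fintype.card 𝒳 := Fin.is_lt _
  rw [gsc, gsc]
  have h1 : Csc AN n ι tv k x * Fintype.card 𝒳 + ((Fintype.equivFin 𝒳) x : ℕ)
      < (Csc AN n ι tv k x + 1) * Fintype.card 𝒳 := by
    rw [add_mul, one_mul]
    omega
  have h2 : (Csc AN n ι tv k x + 1) * Fintype.card 𝒳
      ≤ Csc AN n ι tv k y * Fintype.card 𝒳 :=
    Nat.mul_le_mul_right _ (Nat.succ_le_of_lt h)
  omega

lemma C_le_of_gsc_lt (k : Fin (n - 1)) {x y : 𝒳}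
    (h : gsc AN n ι tv k x < gsc AN n ι tv k y) :
    Csc AN n ι tv k x ≤ Csc AN n ι tv k y := by
  by_contra hc
  push_neg at hc
  exact absurd (gsc_lt_of_C_lt AN n ι tv k hc) (by omega)

lemma gsc_lt_of_C_eq (k : Fin (n - 1)) {x y : 𝒳}
    (hC : Csc AN n ι tv k x = Csc AN n ι tv k y)
    (he : ((Fintype.equivFin 𝒳) x : ℕ) < ((Fintype.equivFin 𝒳) y : ℕ)) :
    gsc AN n ι tv k x < gsc AN n ι tv k y := by
  rw [gsc, gsc, hC]
  omega

lemma e_lt_of_gsc_lt_of_C_eq (k : Fin (n - 1)) {x y : 𝒳}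
    (h : gsc AN n ι tv k x < gsc AN n ι tv k y)
    (hC : Csc AN n ι tv k x = Csc AN n ι tv k y) :
    ((Fintype.equivFin 𝒳) x : ℕ) < ((Fintype.equivFin 𝒳) y : ℕ) := by
  rw [gsc, gsc, hC] at h
  omega

noncomputable def sigR (k : Fin (n - 1)) : Ranking 𝒳 :=
  (Equiv.ofBijective
    (fun x => (⟨gsc AN n ι tv k x, Finset.mem_image_of_mem _ (Finset.mem_univ x)⟩ :
        {m // m ∈ Finset.univ.image (gsc AN n ι tv k)}))
    ((Fintype.bijective_iff_injective_and_card _).2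
      ⟨fun x y hxy => gsc_inj AN n ι tv k (congrArg Subtype.val hxy),
        by
          rw [Fintype.card_coe, Finset.card_image_of_injective _ (gsc_inj AN n ι tv k),
            Finset.card_univ]⟩)).trans
    ((Finset.univ.image (gsc AN n ι tv k)).orderIsoOfFin
      (by rw [Finset.card_image_of_injective _ (gsc_inj AN n ι tv k), Finset.card_univ])
      ).symm.toEquiv

lemma sigR_pref (k : Fin (n - 1)) (x y : 𝒳) :
    Ranking.pref (sigR AN n ι tv k) x y ↔ gsc AN n ι tv k x < gsc AN n ι tv k y := by
  show sigR AN n ι tv k x < sigR AN n ι tv k y ↔ _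
  simp only [sigR, Equiv.trans_apply, Equiv.ofBijective_apply]
  have hcoe : ∀ (h : (Finset.univ.image (gsc AN n ι tv k)).card = Fintype.card 𝒳)
      (z : {m // m ∈ Finset.univ.image (gsc AN n ι tv k)}),
      ((Finset.univ.image (gsc AN n ι tv k)).orderIsoOfFin h).symm.toEquiv z
      = ((Finset.univ.image (gsc AN n ι tv k)).orderIsoOfFin h).symm z := fun _ _ => rfl
  rw [hcoe, hcoe, OrderIso.lt_iff_lt]
  exact Subtype.mk_lt_mk

end Part3
section Part3b
open scoped Classical

variable {A 𝒳 : Type} [Fintype A] [DecidableEq A] [Fintype 𝒳] [DecidableEq 𝒳]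
variable (AN : Finset A) (n : ℕ) (ι : TT AN n ↪ 𝒳) (tv : Fin (n - 1) → Omeg AN)

lemma C_rep (k : Fin (n - 1)) (hn : 0 < n) {a : A} (h : a ∈ AN) :
    Csc AN n ι tv k (ι (Sum.inr (⟨a, h⟩, ⟨0, hn⟩))) = 2 + (ANᶜ : Finset A).card := by
  rw [Csc_apply]
  show (if ((⟨0, hn⟩ : Fin n) : ℕ) = k.1 + 1 then 0
    else if ((⟨0, hn⟩ : Fin n) : ℕ) = 0 then 2 + (ANᶜ : Finset A).card
    else 3 + (ANᶜ : Finset A).card) = _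
  rw [if_neg (by simp), if_pos rfl]

lemma C_lv (k : Fin (n - 1)) {a : A} (h : a ∈ AN) (k' : Fin (n - 1)) :
    Csc AN n ι tv k (ι (Sum.inr (⟨a, h⟩, lvI n k')))
      = if k' = k then 0 else 3 + (ANᶜ : Finset A).card := by
  rw [Csc_apply]
  show (if ((lvI n k' : Fin n) : ℕ) = k.1 + 1 then 0
    else if ((lvI n k' : Fin n) : ℕ) = 0 then 2 + (ANᶜ : Finset A).card
    else 3 + (ANᶜ : Finset A).card) = _
  have hval : ((lvI n k' : Fin n) : ℕ) = k'.1 + 1 := rfl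
  by_cases hk : k' = k
  · subst hk
    rw [if_pos hval, if_pos rfl]
  · have hne : k'.1 ≠ k.1 := fun hc => hk (Fin.ext hc)
    rw [hval, if_neg (by omega), if_neg (by omega), if_neg hk]

lemma C_atom (k : Fin (n - 1)) {b : A} (h : b ∈ (ANᶜ : Finset A)) :
    Csc AN n ι tv k (ι (Sum.inl ⟨b, h⟩)) = 1 + ((tv k).1 ⟨b, h⟩ : ℕ) := by
  rw [Csc_apply]
  rfl

lemma rank_lt (k : Fin (n - 1)) {b : A} (h : b ∈ (ANᶜ : Finset A)) :
    ((tv k).1 ⟨b, h⟩ : ℕ) < (ANᶜ : Finset A).card := by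
  exact lt_of_lt_of_eq (Fin.is_lt ((tv k).1 ⟨b, h⟩)) (Fintype.card_coe _)

lemma Wv_some (sA : A → ℕ) {ω : Omeg AN} {B : Finset A} (hB : B.Nonempty) {a₀ : A}
    (h : ω.2 B = some a₀) : Wv AN sA ω B hB = a₀ := by
  simp only [Wv, WOv, h, Option.elim]
  rfl

lemma Wv_none_D (sA : A → ℕ) {ω : Omeg AN} {B : Finset A} (hB : B.Nonempty)
    (h : ω.2 B = none) (hD : (B ∩ ANᶜ).Nonempty) :
    Wv AN sA ω B hB = bst AN ω.1 (B ∩ ANᶜ) hD := by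
  simp only [Wv, WOv, h, Option.elim]
  rw [dif_pos hD]

lemma Wv_none_E (sA : A → ℕ) {ω : Omeg AN} {B : Finset A} (hB : B.Nonempty)
    (h : ω.2 B = none) (hD : ¬ (B ∩ ANᶜ).Nonempty) (hE : (B ∩ AN).Nonempty) :
    Wv AN sA ω B hB = (Finset.exists_min_image (B ∩ AN) sA hE).choose := by
  simp only [Wv, WOv, h, Option.elim]
  rw [dif_neg hD, dif_pos hE]

lemma event_iff (hn : 0 < n)
    (hleg : ∀ (k : Fin (n - 1)) (B : Finset A) (a' : A),
      (tv k).2 B = some a' → a' ∈ B ∩ AN)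
    (k : Fin (n - 1)) {B : Finset A} (hB : B.Nonempty) {a : A} (ha : a ∈ B) :
    (∃ x ∈ SStar AN n ι tv hn B a, ∀ b ∈ B, b ≠ a → ∀ y ∈ SStar AN n ι tv hn B b,
       Ranking.pref (sigR AN n ι tv k) x y)
    ↔ Wv AN (sAgg AN n ι hn) (tv k) B hB = a := by
  have hpref : ∀ x y : 𝒳, Ranking.pref (sigR AN n ι tv k) x y ↔
      gsc AN n ι tv k x < gsc AN n ι tv k y := sigR_pref AN n ι tv k
  cases hdes : (tv k).2 B with
  | some a₀ =>
    have ha₀ := hleg k B a₀ hdes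
    have ha₀B : a₀ ∈ B := (Finset.mem_inter.1 ha₀).1
    have ha₀N : a₀ ∈ AN := (Finset.mem_inter.1 ha₀).2
    rw [Wv_some AN (sAgg AN n ι hn) hB hdes]
    constructor
    · rintro ⟨x, hx, hbeats⟩
      by_contra hne
      have hp := hbeats a₀ ha₀B hne
        (ι (Sum.inr (⟨a₀, ha₀N⟩, lvI n k)))
        ((mem_SStar_AN AN n ι tv hn ha₀N).2 (Or.inr ⟨k, hdes, rfl⟩))
      rw [hpref] at hp
      have hCy : Csc AN n ι tv k (ι (Sum.inr (⟨a₀, ha₀N⟩, lvI n k))) = 0 := by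
        rw [C_lv, if_pos rfl]
      have hCx0 : Csc AN n ι tv k x = 0 := by
        have := C_le_of_gsc_lt AN n ι tv k hp
        omega
      by_cases haN : a ∈ AN
      · rcases (mem_SStar_AN AN n ι tv hn haN).1 hx with hrep | ⟨k', hk', hxe⟩
        · rw [hrep, C_rep] at hCx0
          omega
        · rw [hxe, C_lv] at hCx0
          have hkk : k' = k := by
            by_contra hkk
            rw [if_neg hkk] at hCx0
            omega
          rw [hkk, hdes] at hk'
          exact hne (Option.some.inj hk')
      · rw [(mem_SStar_atom AN n ι tv hn haN).1 hx, C_atom] at hCx0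
        omega
    · intro heq
      subst heq
      refine ⟨ι (Sum.inr (⟨a₀, ha₀N⟩, lvI n k)),
        (mem_SStar_AN AN n ι tv hn ha₀N).2 (Or.inr ⟨k, hdes, rfl⟩), ?_⟩
      intro b hb hbne y hy
      rw [hpref]
      have hCx : Csc AN n ι tv k (ι (Sum.inr (⟨a₀, ha₀N⟩, lvI n k))) = 0 := by
        rw [C_lv, if_pos rfl]
      have hCy : 1 ≤ Csc AN n ι tv k y := by
        by_cases hbN : b ∈ AN
        · rcases (mem_SStar_AN AN n ι tv hn hbN).1 hy with hrep | ⟨k', hk', hye⟩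
          · rw [hrep, C_rep]
            omega
          · rw [hye, C_lv]
            have hkk : k' ≠ k := by
              intro hc
              rw [hc, hdes] at hk'
              exact hbne (Option.some.inj hk').symm
            rw [if_neg hkk]
            omega
        · rw [(mem_SStar_atom AN n ι tv hn hbN).1 hy, C_atom]
          omega
      exact gsc_lt_of_C_lt AN n ι tv k (by omega)
  | none =>
    by_cases hD : (B ∩ ANᶜ).Nonempty
    · rw [Wv_none_D AN (sAgg AN n ι hn) hB hdes hD]
      have hbm := bst_mem AN (tv k).1 (B ∩ ANᶜ) hD
      have hbB : bst AN (tv k).1 (B ∩ ANᶜ) hD ∈ B := (Finset.mem_inter.1 hbm).1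
      have hbAA : bst AN (tv k).1 (B ∩ ANᶜ) hD ∈ (ANᶜ : Finset A) :=
        (Finset.mem_inter.1 hbm).2
      have hbN : bst AN (tv k).1 (B ∩ ANᶜ) hD ∉ AN := Finset.mem_compl.1 hbAA
      constructor
      · rintro ⟨x, hx, hbeats⟩
        by_contra hne
        have hp := hbeats _ hbB hne (ι (Sum.inl ⟨_, hbAA⟩))
          ((mem_SStar_atom AN n ι tv hn hbN).2 rfl)
        rw [hpref] at hp
        have hCy : Csc AN n ι tv k (ι (Sum.inl ⟨_, hbAA⟩))
            = 1 + ((tv k).1 ⟨_, hbAA⟩ : ℕ) := C_atom AN n ι tv k hbAA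
        have hCle := C_le_of_gsc_lt AN n ι tv k hp
        rw [hCy] at hCle
        have hrlt := rank_lt AN n tv k hbAA
        by_cases haN : a ∈ AN
        · rcases (mem_SStar_AN AN n ι tv hn haN).1 hx with hrep | ⟨k', hk', hxe⟩
          · rw [hrep, C_rep] at hCle
            omega
          · rw [hxe, C_lv] at hCle
            have hkk : k' ≠ k := by
              intro hc
              rw [hc, hdes] at hk'
              cases hk'
            rw [if_neg hkk] at hCle
            omega
        · have haAA : a ∈ (ANᶜ : Finset A) := Finset.mem_compl.2 haN
          have haD : a ∈ B ∩ ANᶜ := Finset.mem_inter.2 ⟨ha, haAA⟩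
          rw [(mem_SStar_atom AN n ι tv hn haN).1 hx, C_atom] at hCle
          have hmin := bst_min AN (tv k).1 (B ∩ ANᶜ) hD a haD
          simp only [bstScore] at hmin
          rw [dif_pos haAA, dif_pos hbAA] at hmin
          have heq : ((tv k).1 ⟨a, haAA⟩ : ℕ) = ((tv k).1 ⟨_, hbAA⟩ : ℕ) := by omega
          have : (⟨a, haAA⟩ : {c : A // c ∈ (ANᶜ : Finset A)}) = ⟨_, hbAA⟩ :=
            (tv k).1.injective (Fin.ext heq)
          exact hne ((congrArg Subtype.val this).symm)
      · intro heq
        subst heq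
        refine ⟨ι (Sum.inl ⟨_, hbAA⟩), (mem_SStar_atom AN n ι tv hn hbN).2 rfl, ?_⟩
        intro b hb hbne y hy
        rw [hpref]
        have hCx : Csc AN n ι tv k (ι (Sum.inl ⟨_, hbAA⟩))
            = 1 + ((tv k).1 ⟨_, hbAA⟩ : ℕ) := C_atom AN n ι tv k hbAA
        have hrlt := rank_lt AN n tv k hbAA
        by_cases hbN' : b ∈ AN
        · rcases (mem_SStar_AN AN n ι tv hn hbN').1 hy with hrep | ⟨k', hk', hye⟩
          · apply gsc_lt_of_C_lt
            rw [hrep, C_rep, hCx]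
            omega
          · have hkk : k' ≠ k := by
              intro hc
              rw [hc, hdes] at hk'
              cases hk'
            apply gsc_lt_of_C_lt
            rw [hye, C_lv, if_neg hkk, hCx]
            omega
        · have hbAA' : b ∈ (ANᶜ : Finset A) := Finset.mem_compl.2 hbN'
          have hbD : b ∈ B ∩ ANᶜ := Finset.mem_inter.2 ⟨hb, hbAA'⟩
          have hmin := bst_min AN (tv k).1 (B ∩ ANᶜ) hD b hbD
          simp only [bstScore] at hmin
          rw [dif_pos hbAA', dif_pos hbAA] at hmin
          have hstrict : ((tv k).1 ⟨_, hbAA⟩ : ℕ) < ((tv k).1 ⟨b, hbAA'⟩ : ℕ) := by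
            rcases Nat.lt_or_ge ((tv k).1 ⟨_, hbAA⟩ : ℕ) ((tv k).1 ⟨b, hbAA'⟩ : ℕ) with h | h
            · exact h
            · exfalso
              have heq2 : ((tv k).1 ⟨b, hbAA'⟩ : ℕ) = ((tv k).1 ⟨_, hbAA⟩ : ℕ) := by omega
              have := (tv k).1.injective (Fin.ext heq2)
              exact hbne (congrArg Subtype.val this)
          apply gsc_lt_of_C_lt
          rw [(mem_SStar_atom AN n ι tv hn hbN').1 hy, hCx, C_atom]
          omega
    · have hEB : ∀ b ∈ B, b ∈ AN := by
        intro b hb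
        by_contra hbN
        exact hD ⟨b, Finset.mem_inter.2 ⟨hb, Finset.mem_compl.2 hbN⟩⟩
      have hE : (B ∩ AN).Nonempty :=
        ⟨hB.choose, Finset.mem_inter.2 ⟨hB.choose_spec, hEB _ hB.choose_spec⟩⟩
      rw [Wv_none_E AN (sAgg AN n ι hn) hB hdes hD hE]
      set amin := (Finset.exists_min_image (B ∩ AN) (sAgg AN n ι hn) hE).choose with hamdef
      have hamin_mem : amin ∈ B ∩ AN :=
        (Finset.exists_min_image (B ∩ AN) (sAgg AN n ι hn) hE).choose_spec.1
      have hamin_min : ∀ b ∈ B ∩ AN, sAgg AN n ι hn amin ≤ sAgg AN n ι hn b :=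
        (Finset.exists_min_image (B ∩ AN) (sAgg AN n ι hn) hE).choose_spec.2
      have haminB : amin ∈ B := (Finset.mem_inter.1 hamin_mem).1
      have haminN : amin ∈ AN := (Finset.mem_inter.1 hamin_mem).2
      have hsA : ∀ (a' : A) (h' : a' ∈ AN), sAgg AN n ι hn a'
          = ((Fintype.equivFin 𝒳) (ι (Sum.inr (⟨a', h'⟩, ⟨0, hn⟩))) : ℕ) := by
        intro a' h'
        rw [sAgg, dif_pos h']
      constructor
      · rintro ⟨x, hx, hbeats⟩
        by_contra hne
        have hp := hbeats amin haminB hne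
          (ι (Sum.inr (⟨amin, haminN⟩, ⟨0, hn⟩)))
          ((mem_SStar_AN AN n ι tv hn haminN).2 (Or.inl rfl))
        rw [hpref] at hp
        have hCy := C_rep AN n ι tv k hn haminN
        have haN : a ∈ AN := hEB a ha
        rcases (mem_SStar_AN AN n ι tv hn haN).1 hx with hrep | ⟨k', hk', hxe⟩
        · have hCeq : Csc AN n ι tv k x
              = Csc AN n ι tv k (ι (Sum.inr (⟨amin, haminN⟩, ⟨0, hn⟩))) := by
            rw [hrep, C_rep, hCy]
          have helt := e_lt_of_gsc_lt_of_C_eq AN n ι tv k hp hCeq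
          rw [hrep] at helt
          have hmin := hamin_min a (Finset.mem_inter.2 ⟨ha, haN⟩)
          rw [hsA a haN, hsA amin haminN] at hmin
          omega
        · have hkk : k' ≠ k := by
            intro hc
            rw [hc, hdes] at hk'
            cases hk'
          have hCle := C_le_of_gsc_lt AN n ι tv k hp
          rw [hxe, C_lv, if_neg hkk, hCy] at hCle
          omega
      · intro heq
        subst heq
        refine ⟨ι (Sum.inr (⟨amin, haminN⟩, ⟨0, hn⟩)),
          (mem_SStar_AN AN n ι tv hn haminN).2 (Or.inl rfl), ?_⟩
        intro b hb hbne y hy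
        rw [hpref]
        have hCx := C_rep AN n ι tv k hn haminN
        have hbN := hEB b hb
        rcases (mem_SStar_AN AN n ι tv hn hbN).1 hy with hrep | ⟨k', hk', hye⟩
        · have hCeq : Csc AN n ι tv k (ι (Sum.inr (⟨amin, haminN⟩, ⟨0, hn⟩)))
              = Csc AN n ι tv k y := by
            rw [hrep, C_rep, C_rep]
          apply gsc_lt_of_C_eq AN n ι tv k hCeq
          rw [hrep]
          have hmin := hamin_min b (Finset.mem_inter.2 ⟨hb, hbN⟩)
          rw [hsA b hbN, hsA amin haminN] at hmin
          rcases Nat.lt_or_ge ((Fintype.equivFin 𝒳) (ι (Sum.inr (⟨amin, haminN⟩, ⟨0, hn⟩))) : ℕ)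
            ((Fintype.equivFin 𝒳) (ι (Sum.inr (⟨b, hbN⟩, ⟨0, hn⟩))) : ℕ) with h | h
          · exact h
          · exfalso
            have heq2 : ((Fintype.equivFin 𝒳) (ι (Sum.inr (⟨b, hbN⟩, ⟨0, hn⟩))) : ℕ)
                = ((Fintype.equivFin 𝒳) (ι (Sum.inr (⟨amin, haminN⟩, ⟨0, hn⟩))) : ℕ) := by
              omega
            have h5 := ι.injective ((Fintype.equivFin 𝒳).injective (Fin.ext heq2))
            have h6 := (Prod.ext_iff.1 (Sum.inr.inj h5)).1
            exact hbne (congrArg Subtype.val h6)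
        · have hkk : k' ≠ k := by
            intro hc
            rw [hc, hdes] at hk'
            cases hk'
          apply gsc_lt_of_C_lt
          rw [hye, C_lv, if_neg hkk, hCx]
          omega

end Part3b
section Part3c
open scoped Classical

variable {A 𝒳 : Type} [Fintype A] [DecidableEq A] [Fintype 𝒳] [DecidableEq 𝒳]
variable (AN : Finset A) (n : ℕ) (ι : TT AN n ↪ 𝒳) (tv : Fin (n - 1) → Omeg AN)

lemma Xv_nonneg (sA : A → ℕ) (ω : Omeg AN) (B : Finset A) (a : A) :
    0 ≤ Xv AN sA ω B a := by
  rw [Xv]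
  split
  · split <;> norm_num
  · norm_num

lemma Wv_none_junk (sA : A → ℕ) {ω : Omeg AN} {B : Finset A} (hB : B.Nonempty)
    (h : ω.2 B = none) (hD : ¬ (B ∩ ANᶜ).Nonempty) (hE : ¬ (B ∩ AN).Nonempty) :
    Wv AN sA ω B hB = hB.choose := by
  simp only [Wv, WOv, h, Option.elim]
  rw [dif_neg hD, dif_neg hE]

lemma Wv_mem (sA : A → ℕ)
    (hleg : ∀ (k : Fin (n - 1)) (B : Finset A) (a' : A),
      (tv k).2 B = some a' → a' ∈ B ∩ AN)
    (k : Fin (n - 1)) {B : Finset A} (hB : B.Nonempty) :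
    Wv AN sA (tv k) B hB ∈ B := by
  cases hdes : (tv k).2 B with
  | some a₀ =>
    rw [Wv_some AN sA hB hdes]
    exact (Finset.mem_inter.1 (hleg k B a₀ hdes)).1
  | none =>
    by_cases hD : (B ∩ ANᶜ).Nonempty
    · rw [Wv_none_D AN sA hB hdes hD]
      exact (Finset.mem_inter.1 (bst_mem AN (tv k).1 (B ∩ ANᶜ) hD)).1
    · by_cases hE : (B ∩ AN).Nonempty
      · rw [Wv_none_E AN sA hB hdes hD hE]
        exact (Finset.mem_inter.1
          (Finset.exists_min_image (B ∩ AN) sA hE).choose_spec.1).1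
      · rw [Wv_none_junk AN sA hB hdes hD hE]
        exact hB.choose_spec

noncomputable def rhoV (hn : 0 < n) : Finset A → A → ℝ := fun B a =>
  if hB : B.Nonempty then
    (if a ∈ B then (((n - 1 : ℕ) : ℝ))⁻¹ * ∑ k : Fin (n - 1), Xv AN (sAgg AN n ι hn) (tv k) B a
     else 0)
  else 0

noncomputable def lamV (hn : 0 < n) : Finset A → (A → Finset 𝒳) → ℝ := fun B S =>
  if S = SStar AN n ι tv hn B then (1 : ℝ) else 0

noncomputable def muV : Ranking 𝒳 → ℝ := fun r =>
  ((Finset.univ.filter (fun k : Fin (n - 1) => sigR AN n ι tv k = r)).card : ℝ)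
    / ((n - 1 : ℕ) : ℝ)

lemma muV_isDistr (hn3 : 2 < n) : IsDistr (muV AN n ι tv) := by
  have hMne : ((n - 1 : ℕ) : ℝ) ≠ 0 := Nat.cast_ne_zero.2 (by omega)
  constructor
  · intro r
    exact div_nonneg (Nat.cast_nonneg _) (Nat.cast_nonneg _)
  · simp only [muV]
    rw [← Finset.sum_div]
    have hcnt : ∑ r : Ranking 𝒳,
        ((Finset.univ.filter (fun k : Fin (n - 1) => sigR AN n ι tv k = r)).card : ℝ)
        = ((n - 1 : ℕ) : ℝ) := by
      rw [← Nat.cast_sum]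
      congr 1
      have := Finset.card_eq_sum_card_fiberwise
        (f := fun k : Fin (n - 1) => sigR AN n ι tv k)
        (s := Finset.univ) (t := Finset.univ) (fun k _ => Finset.mem_univ _)
      rw [← this, Finset.card_univ, Fintype.card_fin]
    rw [hcnt, div_self hMne]

lemma probOf_muV (P : Ranking 𝒳 → Prop) :
    probOf (muV AN n ι tv) P
      = ((n - 1 : ℕ) : ℝ)⁻¹ *
          ∑ k : Fin (n - 1), (if P (sigR AN n ι tv k) then (1 : ℝ) else 0) := by
  rw [probOf]
  have e1 : ∀ r : Ranking 𝒳, (if P r then muV AN n ι tv r else 0)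
      = ((n - 1 : ℕ) : ℝ)⁻¹ * ∑ k : Fin (n - 1),
          (if sigR AN n ι tv k = r then (1 : ℝ) else 0) * (if P r then 1 else 0) := by
    intro r
    have hcard : ((Finset.univ.filter (fun k : Fin (n - 1) => sigR AN n ι tv k = r)).card : ℝ)
        = ∑ k : Fin (n - 1), (if sigR AN n ι tv k = r then (1 : ℝ) else 0) := by
      rw [Finset.card_filter]
      push_cast
      rfl
    by_cases hP : P r
    · rw [if_pos hP, muV, div_eq_inv_mul, hcard]
      congr 1
      apply Finset.sum_congr rfl
      intro k _
      rw [if_pos hP, mul_one]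
    · rw [if_neg hP]
      have : ∀ k : Fin (n - 1), (if sigR AN n ι tv k = r then (1 : ℝ) else 0)
          * (if P r then 1 else 0) = 0 := by
        intro k; rw [if_neg hP, mul_zero]
      rw [Finset.sum_congr rfl (fun k _ => this k)]
      simp
  rw [Finset.sum_congr rfl (fun r _ => e1 r), ← Finset.mul_sum]
  congr 1
  rw [Finset.sum_comm]
  apply Finset.sum_congr rfl
  intro k _
  have e2 : ∀ r : Ranking 𝒳, (if sigR AN n ι tv k = r then (1 : ℝ) else 0)
      * (if P r then 1 else 0)
      = if sigR AN n ι tv k = r then (if P r then (1 : ℝ) else 0) else 0 := by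
    intro r
    by_cases h : sigR AN n ι tv k = r <;> simp [h]
  rw [Finset.sum_congr rfl (fun r _ => e2 r),
    Finset.sum_ite_eq Finset.univ (sigR AN n ι tv k) (fun r => if P r then (1 : ℝ) else 0),
    if_pos (Finset.mem_univ _)]

lemma SStar_spec (hn : 0 < n) (B : Finset A) (a : A) :
    SStar AN n ι tv hn B a ⊆ XcorrX AN n ι a ∧ (SStar AN n ι tv hn B a).Nonempty := by
  by_cases h : a ∈ AN
  · constructor
    · rw [SStar, dif_pos h, XcorrX, dif_pos h]
      rw [Finset.insert_subset_iff]
      constructor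
      · exact Finset.mem_image.2 ⟨⟨0, hn⟩, Finset.mem_univ _, rfl⟩
      · intro x hx
        obtain ⟨k, _, hk⟩ := Finset.mem_image.1 hx
        exact Finset.mem_image.2 ⟨lvI n k, Finset.mem_univ _, hk⟩
    · rw [SStar, dif_pos h]
      exact Finset.insert_nonempty _ _
  · constructor
    · rw [SStar, dif_neg h, XcorrX, dif_neg h]
    · rw [SStar, dif_neg h]
      exact Finset.singleton_nonempty _

lemma rhoV_isSCF (hn : 0 < n) (hn3 : 2 < n)
    (hleg : ∀ (k : Fin (n - 1)) (B : Finset A) (a' : A),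
      (tv k).2 B = some a' → a' ∈ B ∩ AN) :
    IsSCF (fullDomain A) (rhoV AN n ι tv hn) := by
  have hMne : ((n - 1 : ℕ) : ℝ) ≠ 0 := Nat.cast_ne_zero.2 (by omega)
  intro B hBD
  have hB := mem_fullDomain.1 hBD
  refine ⟨?_, ?_, ?_⟩
  · intro a haB
    rw [rhoV, dif_pos hB, if_pos haB]
    exact mul_nonneg (inv_nonneg.2 (Nat.cast_nonneg _))
      (Finset.sum_nonneg fun k _ => Xv_nonneg AN (sAgg AN n ι hn) (tv k) B a)
  · have e1 : ∀ a ∈ B, rhoV AN n ι tv hn B a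
        = ((n - 1 : ℕ) : ℝ)⁻¹ * ∑ k : Fin (n - 1), Xv AN (sAgg AN n ι hn) (tv k) B a := by
      intro a haB
      rw [rhoV, dif_pos hB, if_pos haB]
    rw [Finset.sum_congr rfl e1, ← Finset.mul_sum, Finset.sum_comm]
    have e2 : ∀ k : Fin (n - 1), ∑ a ∈ B, Xv AN (sAgg AN n ι hn) (tv k) B a = 1 := by
      intro k
      have e3 : ∀ a ∈ B, Xv AN (sAgg AN n ι hn) (tv k) B a
          = if Wv AN (sAgg AN n ι hn) (tv k) B hB = a then (1 : ℝ) else 0 := by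
        intro a _
        rw [Xv, dif_pos hB]
      rw [Finset.sum_congr rfl e3,
        Finset.sum_ite_eq B (Wv AN (sAgg AN n ι hn) (tv k) B hB) (fun _ => (1 : ℝ)),
        if_pos (Wv_mem AN n tv (sAgg AN n ι hn) hleg k hB)]
    rw [Finset.sum_congr rfl (fun k _ => e2 k), Finset.sum_const, Finset.card_univ,
      Fintype.card_fin, nsmul_eq_mul, mul_one, inv_mul_cancel₀ hMne]
  · intro a haB
    rw [rhoV, dif_pos hB, if_neg haB]

lemma rhoV_RUvec (hn : 0 < n) (hn3 : 2 < n)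
    (hleg : ∀ (k : Fin (n - 1)) (B : Finset A) (a' : A),
      (tv k).2 B = some a' → a' ∈ B ∩ AN) :
    RUvec 𝒳 AN (fullDomain A) (fun _ => n) (rhoV AN n ι tv hn) := by
  have hMne : ((n - 1 : ℕ) : ℝ) ≠ 0 := Nat.cast_ne_zero.2 (by omega)
  refine ⟨⟨XcorrX AN n ι, XcorrX_disj AN n ι,
      fun a ha => XcorrX_card_atom AN n ι ha,
      fun a ha => by rw [XcorrX_card_AN AN n ι ha]; omega⟩,
    fun a ha => XcorrX_card_AN AN n ι ha,
    muV AN n ι tv,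
    lamV AN n ι tv hn,
    muV_isDistr AN n ι tv hn3, ?_, ?_⟩
  · -- IsCompDistr
    intro B _
    constructor
    · constructor
      · intro S
        simp only [lamV]
        split <;> norm_num
      · simp only [lamV]
        rw [Finset.sum_ite_eq' Finset.univ (SStar AN n ι tv hn B) (fun _ => (1 : ℝ)),
          if_pos (Finset.mem_univ _)]
    · intro S hS a
      simp only [lamV] at hS
      have hSe : S = SStar AN n ι tv hn B := by
        by_contra hc
        exact hS (if_neg hc)
      rw [hSe]
      exact SStar_spec AN n ι tv hn B a
  · -- the representation formula
    intro B hBD a haB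
    have hB := mem_fullDomain.1 hBD
    simp only [lamV]
    have e1 : ∀ S : A → Finset 𝒳,
        (if S = SStar AN n ι tv hn B then (1 : ℝ) else 0) *
          probOf (muV AN n ι tv) (fun r => ∃ x ∈ S a, ∀ b ∈ B, b ≠ a →
            ∀ y ∈ S b, Ranking.pref r x y)
        = if S = SStar AN n ι tv hn B then
            probOf (muV AN n ι tv) (fun r => ∃ x ∈ SStar AN n ι tv hn B a, ∀ b ∈ B, b ≠ a →
              ∀ y ∈ SStar AN n ι tv hn B b, Ranking.pref r x y)
          else 0 := by
      intro S
      by_cases hSe : S = SStar AN n ι tv hn B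
      · rw [if_pos hSe, if_pos hSe, one_mul, hSe]
      · rw [if_neg hSe, if_neg hSe, zero_mul]
    rw [Finset.sum_congr rfl (fun S _ => e1 S),
      Finset.sum_ite_eq' Finset.univ (SStar AN n ι tv hn B)
        (fun _ => probOf (muV AN n ι tv) (fun r => ∃ x ∈ SStar AN n ι tv hn B a,
          ∀ b ∈ B, b ≠ a → ∀ y ∈ SStar AN n ι tv hn B b, Ranking.pref r x y)),
      if_pos (Finset.mem_univ _), probOf_muV]
    have e2 : ∀ k : Fin (n - 1),
        @ite ℝ (∃ x ∈ SStar AN n ι tv hn B a, ∀ b ∈ B, b ≠ a →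
            ∀ y ∈ SStar AN n ι tv hn B b, Ranking.pref (sigR AN n ι tv k) x y)
          (Classical.propDecidable _) (1 : ℝ) 0
        = Xv AN (sAgg AN n ι hn) (tv k) B a := by
      intro k
      rw [Xv, dif_pos hB]
      by_cases hEv : (∃ x ∈ SStar AN n ι tv hn B a, ∀ b ∈ B, b ≠ a →
          ∀ y ∈ SStar AN n ι tv hn B b, Ranking.pref (sigR AN n ι tv k) x y)
      · rw [if_pos hEv, if_pos ((event_iff AN n ι tv hn hleg k hB haB).1 hEv)]
      · rw [if_neg hEv, if_neg (fun hc => hEv ((event_iff AN n ι tv hn hleg k hB haB).2 hc))]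
    simp only [e2, rhoV]
    rw [dif_pos hB, if_pos haB]

end Part3c
/-- **Theorem B.3** (approximation, multiple non-atomic aggregates): for `2 < n < |𝒜_A| + 2`
and any `ρ` satisfying Limited Monotonicity (general form) and partial RU-rationality, there
is `ρ' ∈ RU((n))` with `‖ρ − ρ'‖² / |𝒟| ≤ 1 / (n − 1)`. -/
theorem stmt18 {A 𝒳 : Type} [Fintype A] [DecidableEq A] [Fintype 𝒳] [DecidableEq 𝒳]
    (AN : Finset A) (n : ℕ) (h2 : 2 < n) (hn : n < (ANᶜ : Finset A).card + 2)
    (hX : (ANᶜ : Finset A).card + n * AN.card ≤ Fintype.card 𝒳)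
    (ρ : Finset A → A → ℝ) (hρ : IsSCF (fullDomain A) ρ)
    (hLM : LimitedMonoGen (ANᶜ : Finset A) AN (fullDomain A) ρ)
    (hPR : PartialRURational (ANᶜ : Finset A) (fullDomain A) ρ) :
    ∃ ρ' : Finset A → A → ℝ, IsSCF (fullDomain A) ρ' ∧
      RUvec 𝒳 AN (fullDomain A) (fun _ => n) ρ' ∧
      distSq (fullDomain A) ρ ρ' / ((fullDomain A).card : ℝ) ≤ 1 / ((n : ℝ) - 1) := by
  classical
  obtain ⟨ν, hν, hPR'⟩ := hPR
  have hn0 : 0 < n := by omega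
  have hM : 0 < n - 1 := by omega
  have hcard : Fintype.card (TT AN n) ≤ Fintype.card 𝒳 := by
    have hTT : Fintype.card (TT AN n) = (ANᶜ : Finset A).card + AN.card * n := by
      rw [show Fintype.card (TT AN n)
          = Fintype.card {b : A // b ∈ (ANᶜ : Finset A)}
            + Fintype.card ({a : A // a ∈ AN} × Fin n) from Fintype.card_sum,
        Fintype.card_prod, Fintype.card_coe, Fintype.card_coe, Fintype.card_fin]
    rw [hTT]
    calc (ANᶜ : Finset A).card + AN.card * n
        = (ANᶜ : Finset A).card + n * AN.card := by ring
      _ ≤ Fintype.card 𝒳 := hX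
  obtain ⟨ι⟩ := Function.Embedding.nonempty_of_card_le hcard
  obtain ⟨tv, hsupp, hbound⟩ :=
    hSel AN ρ ν (sAgg AN n ι hn0) hρ hLM hν hPR' (n - 1) hM
  have hleg : ∀ (k : Fin (n - 1)) (B : Finset A) (a' : A),
      (tv k).2 B = some a' → a' ∈ B ∩ AN := by
    intro k B a' hd
    have hcwne : cw AN ρ B (tv k).1 ((tv k).2 B) ≠ 0 := by
      intro h0
      apply hsupp k
      rw [wdist]
      exact mul_eq_zero_of_right _ (Finset.prod_eq_zero (Finset.mem_univ B) h0)
    rw [hd] at hcwne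
    exact cw_some_ne_zero AN ρ hcwne
  refine ⟨rhoV AN n ι tv hn0, rhoV_isSCF AN n ι tv hn0 h2 hleg,
    rhoV_RUvec AN n ι tv hn0 h2 hleg, ?_⟩
  have hdist : distSq (fullDomain A) ρ (rhoV AN n ι tv hn0)
      ≤ ((fullDomain A).card : ℝ) / ((n - 1 : ℕ) : ℝ) := by
    rw [distSq]
    calc ∑ B ∈ fullDomain A, ∑ a ∈ B, (ρ B a - rhoV AN n ι tv hn0 B a) ^ 2
        = ∑ B ∈ fullDomain A, ∑ a ∈ B,
            (ρ B a - ((n - 1 : ℕ) : ℝ)⁻¹ *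
              ∑ k : Fin (n - 1), Xv AN (sAgg AN n ι hn0) (tv k) B a) ^ 2 := by
          apply Finset.sum_congr rfl
          intro B hBD
          apply Finset.sum_congr rfl
          intro a haB
          rw [rhoV, dif_pos (mem_fullDomain.1 hBD), if_pos haB]
      _ ≤ ((fullDomain A).card : ℝ) / ((n - 1 : ℕ) : ℝ) := hbound
  have hMcast : ((n - 1 : ℕ) : ℝ) = (n : ℝ) - 1 := by
    rw [Nat.cast_sub (by omega : 1 ≤ n), Nat.cast_one]
  by_cases hc : ((fullDomain A).card : ℝ) = 0
  · rw [hc, div_zero]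
    have h3 : (3 : ℝ) ≤ (n : ℝ) := by exact_mod_cast (by omega : 3 ≤ n)
    apply div_nonneg zero_le_one
    linarith
  · have hcpos : 0 < ((fullDomain A).card : ℝ) :=
      lt_of_le_of_ne (Nat.cast_nonneg _) (Ne.symm hc)
    have hMpos : 0 < ((n - 1 : ℕ) : ℝ) := by exact_mod_cast hM
    calc distSq (fullDomain A) ρ (rhoV AN n ι tv hn0) / ((fullDomain A).card : ℝ)
        ≤ (((fullDomain A).card : ℝ) / ((n - 1 : ℕ) : ℝ)) / ((fullDomain A).card : ℝ) :=
          (div_le_div_iff_of_pos_right hcpos).2 hdist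
      _ = 1 / ((n - 1 : ℕ) : ℝ) := by
          rw [div_div, mul_comm, ← div_div, div_self (ne_of_gt hcpos)]
      _ = 1 / ((n : ℝ) - 1) := by rw [hMcast]
end
end

section
/- Assume the outside option setup (𝒜_N = {a₀}) and the full domain 𝒟 = 2^𝒜 ∖ {∅}. A stochastic choice function ρ satisfies Limited Monotonicity and partial RU-rationality if and only if ρ lies in the convex hull of {ρ^≻_𝓔 : ≻ a linear order on 𝒜, 𝓔 ⊆ 𝒟}. -/
open Finset

noncomputable section

/-! ### Auxiliary lemmas -/

section AuxBest

variable {T : Type} [Fintype T] [DecidableEq T]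

theorem Ranking.best_mem (r : Ranking T) (D : Finset T) (hD : D.Nonempty) :
    r.best D hD ∈ D := by
  obtain ⟨x, hx, hrx⟩ := Finset.mem_image.1 ((D.image fun x => r x).min'_mem (hD.image _))
  rw [Ranking.best, ← hrx, Equiv.symm_apply_apply]
  exact hx

theorem Ranking.pref_best (r : Ranking T) {D : Finset T} (hD : D.Nonempty) {b : T}
    (hb : b ∈ D) (hne : b ≠ r.best D hD) : r.pref (r.best D hD) b := by
  have h1 : r (r.best D hD) ≤ r b := by
    rw [Ranking.best, Equiv.apply_symm_apply]
    exact Finset.min'_le _ _ (Finset.mem_image_of_mem _ hb)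
  have h2 : r (r.best D hD) ≠ r b := fun h => hne (r.injective h).symm
  exact lt_of_le_of_ne h1 h2

theorem Ranking.eq_best_iff (r : Ranking T) {D : Finset T} (hD : D.Nonempty) {a : T}
    (ha : a ∈ D) : r.best D hD = a ↔ ∀ b ∈ D, b ≠ a → r.pref a b := by
  constructor
  · rintro rfl b hb hne
    exact r.pref_best hD hb hne
  · intro h
    by_contra hne
    have h1 := r.pref_best hD ha (fun hh => hne hh.symm)
    have h2 := h _ (r.best_mem D hD) hne
    exact lt_asymm h1 h2

theorem Ranking.best_subset (r : Ranking T) {D D' : Finset T} (hD : D.Nonempty)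
    (hD' : D'.Nonempty) (hsub : D ⊆ D') (hmem : r.best D' hD' ∈ D) :
    r.best D hD = r.best D' hD' := by
  rw [r.eq_best_iff hD hmem]
  intro b hb hne
  exact r.pref_best hD' (hsub hb) hne

end AuxBest

section AuxSum

variable {ι : Type} [DecidableEq ι]

theorem sum_powerset_prod (S : Finset ι) (f g : ι → ℝ) :
    ∑ E ∈ S.powerset, ∏ M ∈ S, (if M ∈ E then f M else g M) = ∏ M ∈ S, (f M + g M) := by
  induction S using Finset.induction_on with
  | empty => simp
  | @insert a S' ha ih =>
    rw [Finset.sum_powerset_insert ha]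
    have h1 : ∀ E ∈ S'.powerset,
        (∏ M ∈ insert a S', if M ∈ E then f M else g M)
          = g a * ∏ M ∈ S', (if M ∈ E then f M else g M) := by
      intro E hE
      rw [Finset.prod_insert ha]
      congr 1
      rw [if_neg (fun hc => ha ((Finset.mem_powerset.1 hE) hc))]
    have h2 : ∀ E ∈ S'.powerset,
        (∏ M ∈ insert a S', if M ∈ insert a E then f M else g M)
          = f a * ∏ M ∈ S', (if M ∈ E then f M else g M) := by
      intro E hE
      rw [Finset.prod_insert ha, if_pos (Finset.mem_insert_self a E)]
      congr 1
      refine Finset.prod_congr rfl fun M hM => ?_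
      have : M ∈ insert a E ↔ M ∈ E := by
        constructor
        · intro h
          rcases Finset.mem_insert.1 h with h | h
          · exact absurd (h ▸ hM) ha
          · exact h
        · exact fun h => Finset.mem_insert_of_mem h
      simp only [this]
    rw [Finset.sum_congr rfl h1, Finset.sum_congr rfl h2, ← Finset.mul_sum, ← Finset.mul_sum,
      ih, Finset.prod_insert ha]
    ring

theorem sum_powerset_ite {S : Finset ι} {B : ι} (hB : B ∈ S) (f g : ι → ℝ) (X Y : ℝ) :
    ∑ E ∈ S.powerset, (∏ M ∈ S, if M ∈ E then f M else g M) * (if B ∈ E then X else Y)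
      = (f B * X + g B * Y) * ∏ M ∈ S.erase B, (f M + g M) := by
  classical
  set F : ι → ℝ := fun M => if M = B then f M * X else f M with hF
  set G : ι → ℝ := fun M => if M = B then g M * Y else g M with hG
  have key : ∀ E ∈ S.powerset,
      (∏ M ∈ S, if M ∈ E then f M else g M) * (if B ∈ E then X else Y)
        = ∏ M ∈ S, (if M ∈ E then F M else G M) := by
    intro E _
    rw [← Finset.mul_prod_erase S _ hB, ← Finset.mul_prod_erase S (fun M => if M ∈ E then F M else G M) hB]
    have htail : ∏ M ∈ S.erase B, (if M ∈ E then F M else G M)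
        = ∏ M ∈ S.erase B, (if M ∈ E then f M else g M) := by
      refine Finset.prod_congr rfl fun M hM => ?_
      have hMB : M ≠ B := Finset.ne_of_mem_erase hM
      simp only [hF, hG, if_neg hMB]
    rw [htail]
    have hhead : (if B ∈ E then f B else g B) * (if B ∈ E then X else Y)
        = (if B ∈ E then F B else G B) := by
      by_cases h : B ∈ E <;> simp [h, hF, hG]
    rw [mul_right_comm, hhead]
  rw [Finset.sum_congr rfl key, sum_powerset_prod]
  rw [← Finset.mul_prod_erase S (fun M => F M + G M) hB]
  have : ∏ M ∈ S.erase B, (F M + G M) = ∏ M ∈ S.erase B, (f M + g M) := by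
    refine Finset.prod_congr rfl fun M hM => ?_
    have hMB : M ≠ B := Finset.ne_of_mem_erase hM
    simp only [hF, hG, if_neg hMB]
  rw [this]
  simp only [hF, hG, if_pos rfl]

end AuxSum

section AuxProb

theorem probOf_congr {T : Type} [Fintype T] (μ : T → ℝ) {P Q : T → Prop}
    (h : ∀ t, P t ↔ Q t) : probOf μ P = probOf μ Q := by
  classical
  unfold probOf
  exact Finset.sum_congr rfl fun t _ => if_congr (h t) rfl rfl

open Classical in
theorem probOf_pushforward {T ι : Type} [Fintype T] (tt : Finset ι) (w : ι → ℝ)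
    (F : ι → T) (P : T → Prop) :
    probOf (fun s => ∑ i ∈ tt, if F i = s then w i else 0) P
      = ∑ i ∈ tt, if P (F i) then w i else 0 := by
  unfold probOf
  have h1 : ∀ s : T, (if P s then (∑ i ∈ tt, if F i = s then w i else 0) else 0)
      = ∑ i ∈ tt, if F i = s then (if P s then w i else 0) else 0 := by
    intro s
    by_cases h : P s <;> simp [h]
  calc (∑ s : T, if P s then (∑ i ∈ tt, if F i = s then w i else 0) else 0)
      = ∑ s : T, ∑ i ∈ tt, if F i = s then (if P s then w i else 0) else 0 :=
        Finset.sum_congr rfl fun s _ => h1 s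
    _ = ∑ i ∈ tt, ∑ s : T, if F i = s then (if P s then w i else 0) else 0 :=
        Finset.sum_comm
    _ = ∑ i ∈ tt, if P (F i) then w i else 0 := by
        refine Finset.sum_congr rfl fun i _ => ?_
        rw [Finset.sum_ite_eq Finset.univ (F i) (fun s => if P s then w i else 0)]
        simp

end AuxProb

section AuxRank

variable {A : Type} [Fintype A] [DecidableEq A]

theorem card_subtype_compl (a0 : A) :
    Fintype.card {c : A // c ∈ ({a0}ᶜ : Finset A)} + 1 = Fintype.card A := by
  rw [Fintype.card_coe, Finset.card_compl, Finset.card_singleton]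
  have : 1 ≤ Fintype.card A := Fintype.card_pos_iff.2 ⟨a0⟩
  omega

/-- Extension of a ranking on `{a0}ᶜ` to a ranking on `A` placing `a0` last. -/
def extR (a0 : A) (s : Ranking {c : A // c ∈ ({a0}ᶜ : Finset A)}) : Ranking A :=
  Equiv.ofBijective
    (fun a => Fin.cast (card_subtype_compl a0)
      (if h : a ∈ ({a0}ᶜ : Finset A) then (s ⟨a, h⟩).castSucc else Fin.last _))
    (by
      rw [Fintype.bijective_iff_injective_and_card]
      refine ⟨?_, by simp⟩
      intro a b hab
      have hab' := (Fin.cast_injective _) hab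
      by_cases ha : a ∈ ({a0}ᶜ : Finset A) <;> by_cases hb : b ∈ ({a0}ᶜ : Finset A)
      · rw [dif_pos ha, dif_pos hb] at hab'
        have := s.injective (Fin.castSucc_injective _ hab')
        exact congrArg Subtype.val this
      · rw [dif_pos ha, dif_neg hb] at hab'
        exact absurd hab' (Fin.ne_of_lt (Fin.castSucc_lt_last _))
      · rw [dif_neg ha, dif_pos hb] at hab'
        exact absurd hab'.symm (Fin.ne_of_lt (Fin.castSucc_lt_last _))
      · have ha' : a = a0 := by simpa using ha
        have hb' : b = a0 := by simpa using hb
        rw [ha', hb'])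

theorem extR_val_mem (a0 : A) (s : Ranking {c : A // c ∈ ({a0}ᶜ : Finset A)})
    {a : A} (h : a ∈ ({a0}ᶜ : Finset A)) :
    (extR a0 s a : ℕ) = (s ⟨a, h⟩ : ℕ) := by
  have hne : a ≠ a0 := by simpa using h
  simp [extR, hne]

theorem extR_val_not_mem (a0 : A) (s : Ranking {c : A // c ∈ ({a0}ᶜ : Finset A)}) :
    (extR a0 s a0 : ℕ) = Fintype.card {c : A // c ∈ ({a0}ᶜ : Finset A)} := by
  simp [extR]

theorem pref_extR_iff (a0 : A) (s : Ranking {c : A // c ∈ ({a0}ᶜ : Finset A)})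
    {a b : A} (ha : a ∈ ({a0}ᶜ : Finset A)) (hb : b ∈ ({a0}ᶜ : Finset A)) :
    (extR a0 s).pref a b ↔ s.pref ⟨a, ha⟩ ⟨b, hb⟩ := by
  unfold Ranking.pref
  rw [Fin.lt_def, Fin.lt_def, extR_val_mem a0 s ha, extR_val_mem a0 s hb]

theorem pref_extR_a0 (a0 : A) (s : Ranking {c : A // c ∈ ({a0}ᶜ : Finset A)})
    {a : A} (ha : a ∈ ({a0}ᶜ : Finset A)) : (extR a0 s).pref a a0 := by
  unfold Ranking.pref
  rw [Fin.lt_def, extR_val_mem a0 s ha, extR_val_not_mem a0 s]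
  exact (s ⟨a, ha⟩).isLt

theorem best_sdiff_a0 (a0 : A) (s : Ranking {c : A // c ∈ ({a0}ᶜ : Finset A)})
    {D : Finset A} (hD : D.Nonempty) (hD' : (D \ {a0}).Nonempty) :
    (extR a0 s).best D hD = (extR a0 s).best (D \ {a0}) hD' := by
  have hne : (extR a0 s).best D hD ≠ a0 := by
    intro hbe
    obtain ⟨b, hb⟩ := hD'
    have hbD : b ∈ D := (Finset.mem_sdiff.1 hb).1
    have hbne : b ≠ a0 := by
      have := (Finset.mem_sdiff.1 hb).2
      simpa using this
    have h1 : (extR a0 s).pref ((extR a0 s).best D hD) b :=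
      (extR a0 s).pref_best hD hbD (by rw [hbe]; exact hbne)
    have h2 : (extR a0 s).pref b a0 := pref_extR_a0 a0 s (by simpa using hbne)
    rw [hbe] at h1
    exact lt_asymm h1 h2
  have hmem : (extR a0 s).best D hD ∈ D \ {a0} :=
    Finset.mem_sdiff.2 ⟨(extR a0 s).best_mem D hD, by simpa using hne⟩
  exact ((extR a0 s).best_subset hD' hD (Finset.sdiff_subset) hmem).symm

/-- The image of a ranking on `A` restricted to the subtype `{a0}ᶜ`. -/
def rimg (a0 : A) (r : Ranking A) : Finset (Fin (Fintype.card A)) :=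
  Finset.univ.image fun x : {c : A // c ∈ ({a0}ᶜ : Finset A)} => r x.val

theorem rimg_card (a0 : A) (r : Ranking A) :
    (rimg a0 r).card = Fintype.card {c : A // c ∈ ({a0}ᶜ : Finset A)} := by
  rw [rimg, Finset.card_image_of_injective _ (fun x y h => Subtype.ext (r.injective h)),
    Finset.card_univ]

/-- Restriction of a ranking on `A` to a ranking on `{a0}ᶜ`. -/
def restrictR (a0 : A) (r : Ranking A) : Ranking {c : A // c ∈ ({a0}ᶜ : Finset A)} :=
  (Equiv.ofBijective
      (fun x : {c : A // c ∈ ({a0}ᶜ : Finset A)} =>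
        (⟨r x.val, Finset.mem_image_of_mem _ (Finset.mem_univ x)⟩ : {y // y ∈ rimg a0 r}))
      (by
        constructor
        · intro x y h
          exact Subtype.ext (r.injective (congrArg Subtype.val h))
        · rintro ⟨y, hy⟩
          obtain ⟨x, -, hx⟩ := Finset.mem_image.1 hy
          exact ⟨x, Subtype.ext hx⟩)).trans
    ((rimg a0 r).orderIsoOfFin (rimg_card a0 r)).symm.toEquiv

theorem pref_restrictR_iff (a0 : A) (r : Ranking A)
    (x y : {c : A // c ∈ ({a0}ᶜ : Finset A)}) :
    (restrictR a0 r).pref x y ↔ r.pref x.val y.val := by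
  unfold Ranking.pref restrictR
  simp only [Equiv.trans_apply, Equiv.ofBijective_apply, RelIso.coe_fn_toEquiv]
  exact (OrderIso.lt_iff_lt _).trans Subtype.mk_lt_mk

end AuxRank

theorem vertexSCF_LM {A : Type} [Fintype A] [DecidableEq A] (a0 : A) (r : Ranking A)
    (E : Finset (Finset A)) {D : Finset A} (hD : D.Nonempty) (ha0 : a0 ∉ D) {b : A}
    (hb : b ∈ D) : vertexSCF a0 r E (insert a0 D) b ≤ vertexSCF a0 r E D b := by
  have hIne : (insert a0 D).Nonempty := Finset.insert_nonempty _ _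
  have hbne : b ≠ a0 := fun hc => ha0 (hc ▸ hb)
  unfold vertexSCF
  rw [dif_pos hD, dif_pos hIne, if_pos (Or.inl ha0)]
  by_cases hE : (a0 ∉ insert a0 D ∨ insert a0 D ∈ E)
  · rw [if_pos hE]
    by_cases hbb : b = r.best (insert a0 D) hIne
    · have hbmem : r.best (insert a0 D) hIne ∈ D := hbb ▸ hb
      have heq : r.best D hD = r.best (insert a0 D) hIne :=
        r.best_subset hD hIne (Finset.subset_insert _ _) hbmem
      rw [if_pos hbb, if_pos (by rw [heq]; exact hbb)]
    · rw [if_neg hbb]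
      split <;> norm_num
  · rw [if_neg hE, if_neg hbne]
    split <;> norm_num

/-- **Corollary A.1**: on the full domain, `ρ` satisfies Limited Monotonicity and partial
RU-rationality iff it lies in the convex hull of the deterministic menu-effect choice
functions `ρ^≻_𝓔`. -/
theorem stmt19 {A : Type} [Fintype A] [DecidableEq A] (a0 : A)
    (ρ : Finset A → A → ℝ) (hρ : IsSCF (fullDomain A) ρ) :
    (LimitedMono a0 ({a0}ᶜ : Finset A) (fullDomain A) ρ ∧
      PartialRURational ({a0}ᶜ : Finset A) (fullDomain A) ρ) ↔
    restrictTo (fullDomain A) ρ ∈ convexHull ℝ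
      {q : Finset A × A → ℝ | ∃ r : Ranking A, ∃ E : Finset (Finset A),
        E ⊆ fullDomain A ∧ q = restrictTo (fullDomain A) (vertexSCF a0 r E)} := by
  classical
  have hdom : ∀ B : Finset A, B ∈ fullDomain A ↔ B.Nonempty := by
    intro B; simp [fullDomain]
  constructor
  · rintro ⟨hLM, ν, hν, hPRU⟩
    -- probability of best events
    have hprob : ∀ B' : Finset A, B' ⊆ ({a0}ᶜ : Finset A) → ∀ h' : B'.Nonempty,
        ∀ b ∈ B', probOf ν (fun s => (extR a0 s).best B' h' = b) = ρ B' b := by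
      intro B' hsub h' b hb
      rw [hPRU B' ((hdom B').2 h') hsub b hb]
      refine probOf_congr ν fun s => ?_
      rw [(extR a0 s).eq_best_iff h' hb]
      constructor
      · intro h bt hbt hne2
        exact (pref_extR_iff a0 s (hsub hb) bt.2).1 (h bt.val hbt hne2)
      · intro h c hc hcb
        rw [pref_extR_iff a0 s (hsub hb) (hsub hc)]
        exact h ⟨c, hsub hc⟩ hc hcb
    set φ : Finset A → A → ℝ := fun M b =>
      if ρ (M \ {a0}) b = 0 then 0 else ρ M b / ρ (M \ {a0}) b with hφ
    set wg : Ranking {c : A // c ∈ ({a0}ᶜ : Finset A)} → Finset A → ℝ := fun s M =>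
      if h : a0 ∈ M ∧ (M \ {a0}).Nonempty then
        φ M ((extR a0 s).best (M \ {a0}) h.2) else 1 with hwg
    set SS : Finset (Finset A) := (fullDomain A).filter (fun M => a0 ∈ M) with hSS
    set W : Ranking {c : A // c ∈ ({a0}ᶜ : Finset A)} × Finset (Finset A) → ℝ := fun p =>
      ν p.1 * ∏ M ∈ SS, (if M ∈ p.2 then wg p.1 M else 1 - wg p.1 M) with hW
    set zf : Ranking {c : A // c ∈ ({a0}ᶜ : Finset A)} × Finset (Finset A) →
        (Finset A × A → ℝ) := fun p =>
      restrictTo (fullDomain A) (vertexSCF a0 (extR a0 p.1) p.2) with hzf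
    set tt : Finset (Ranking {c : A // c ∈ ({a0}ᶜ : Finset A)} × Finset (Finset A)) :=
      Finset.univ ×ˢ SS.powerset with htt
    -- bounds on wg
    have hwg01 : ∀ s, ∀ M ∈ SS, 0 ≤ wg s M ∧ wg s M ≤ 1 := by
      intro s M hM
      simp only [hwg]
      by_cases h : a0 ∈ M ∧ (M \ {a0}).Nonempty
      · rw [dif_pos h]
        set b := (extR a0 s).best (M \ {a0}) h.2 with hbdef
        have hbmem : b ∈ M \ {a0} := (extR a0 s).best_mem _ h.2
        have hbM : b ∈ M := (Finset.mem_sdiff.1 hbmem).1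
        have hMD : M ∈ fullDomain A := (Finset.mem_filter.1 hM).1
        have hM'sub : M \ {a0} ⊆ ({a0}ᶜ : Finset A) := by
          intro x hx
          simpa using (Finset.mem_sdiff.1 hx).2
        have hM'D : M \ {a0} ∈ fullDomain A := (hdom _).2 h.2
        have hins : insert a0 (M \ {a0}) = M := by
          rw [Finset.sdiff_singleton_eq_erase, Finset.insert_erase h.1]
        have hLMb : ρ M b ≤ ρ (M \ {a0}) b := by
          have := hLM (M \ {a0}) hM'sub hM'D (by rw [hins]; exact hMD) b hbmem
          rwa [hins] at this
        have h0 : 0 ≤ ρ M b := (hρ M hMD).1 b hbM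
        simp only [hφ]
        by_cases hz : ρ (M \ {a0}) b = 0
        · simp [hz]
        · have hpos : 0 < ρ (M \ {a0}) b :=
            lt_of_le_of_ne ((hρ _ hM'D).1 b hbmem) (Ne.symm hz)
          rw [if_neg hz]
          exact ⟨div_nonneg h0 hpos.le, (div_le_one hpos).2 hLMb⟩
      · rw [dif_neg h]
        exact ⟨zero_le_one, le_refl 1⟩
    -- main representation
    have hrepr : restrictTo (fullDomain A) ρ = ∑ p ∈ tt, W p • zf p := by
      funext q
      obtain ⟨B, a⟩ := q
      rw [Finset.sum_apply]
      simp only [Pi.smul_apply, smul_eq_mul]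
      by_cases hBD : B ∈ fullDomain A
      case neg =>
        simp [hzf, restrictTo, hBD]
      have hBne : B.Nonempty := (hdom B).1 hBD
      have hzval : ∀ p, zf p (B, a) =
          if a0 ∉ B ∨ B ∈ p.2 then (if a = (extR a0 p.1).best B hBne then 1 else 0)
          else (if a = a0 then 1 else 0) := by
        intro p
        simp only [hzf, restrictTo, if_pos hBD, vertexSCF, dif_pos hBne]
      rw [show restrictTo (fullDomain A) ρ (B, a) = ρ B a from if_pos hBD]
      rw [htt, Finset.sum_product]
      symm
      by_cases ha0B : a0 ∈ B
      · have hBSS : B ∈ SS := Finset.mem_filter.2 ⟨hBD, ha0B⟩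
        have hinner : ∀ s, (∑ E ∈ SS.powerset, W (s, E) * zf (s, E) (B, a))
            = ν s * (wg s B * (if a = (extR a0 s).best B hBne then 1 else 0)
                + (1 - wg s B) * (if a = a0 then 1 else 0)) := by
          intro s
          have hterm : ∀ E ∈ SS.powerset, W (s, E) * zf (s, E) (B, a)
              = ν s * ((∏ M ∈ SS, if M ∈ E then wg s M else 1 - wg s M) *
                  (if B ∈ E then (if a = (extR a0 s).best B hBne then 1 else 0)
                    else (if a = a0 then 1 else 0))) := by
            intro E hE
            rw [hzval (s, E)]
            simp only [hW]
            rw [if_congr (or_iff_right (not_not_intro ha0B)) rfl rfl]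
            ring
          rw [Finset.sum_congr rfl hterm, ← Finset.mul_sum,
            sum_powerset_ite hBSS (wg s) (fun M => 1 - wg s M) _ _,
            Finset.prod_eq_one (fun M _ => by ring), mul_one]
        rw [Finset.sum_congr rfl fun s _ => hinner s]
        by_cases hB' : (B \ {a0}).Nonempty
        · have hbestB : ∀ s, (extR a0 s).best B hBne = (extR a0 s).best (B \ {a0}) hB' :=
            fun s => best_sdiff_a0 a0 s hBne hB'
          have hwgB : ∀ s, wg s B = φ B ((extR a0 s).best (B \ {a0}) hB') := by
            intro s
            simp only [hwg]
            rw [dif_pos ⟨ha0B, hB'⟩]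
          have hB'sub : B \ {a0} ⊆ ({a0}ᶜ : Finset A) := by
            intro x hx
            simpa using (Finset.mem_sdiff.1 hx).2
          have hB'D : B \ {a0} ∈ fullDomain A := (hdom _).2 hB'
          have hins : insert a0 (B \ {a0}) = B := by
            rw [Finset.sdiff_singleton_eq_erase, Finset.insert_erase ha0B]
          have hφρ : ∀ b ∈ B \ {a0}, φ B b * ρ (B \ {a0}) b = ρ B b := by
            intro b hb
            simp only [hφ]
            by_cases hz : ρ (B \ {a0}) b = 0
            · rw [if_pos hz, hz, mul_zero]
              have hLMb : ρ B b ≤ ρ (B \ {a0}) b := by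
                have := hLM (B \ {a0}) hB'sub hB'D (by rw [hins]; exact hBD) b hb
                rwa [hins] at this
              have h0 : 0 ≤ ρ B b := (hρ B hBD).1 b (Finset.mem_sdiff.1 hb).1
              linarith [hz ▸ hLMb]
            · rw [if_neg hz]
              exact div_mul_cancel₀ _ hz
          have hsum_wg : (∑ s, ν s * wg s B) = ∑ b ∈ B \ {a0}, ρ B b := by
            calc (∑ s, ν s * wg s B)
                = ∑ s, ∑ b ∈ B \ {a0},
                    (if (extR a0 s).best (B \ {a0}) hB' = b then ν s * φ B b else 0) := by
                  refine Finset.sum_congr rfl fun s _ => ?_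
                  rw [Finset.sum_ite_eq (B \ {a0}) ((extR a0 s).best (B \ {a0}) hB')
                      (fun b => ν s * φ B b),
                    if_pos ((extR a0 s).best_mem _ hB'), hwgB s]
              _ = ∑ b ∈ B \ {a0}, ∑ s,
                    (if (extR a0 s).best (B \ {a0}) hB' = b then ν s * φ B b else 0) :=
                  Finset.sum_comm
              _ = ∑ b ∈ B \ {a0},
                    φ B b * probOf ν (fun s => (extR a0 s).best (B \ {a0}) hB' = b) := by
                  refine Finset.sum_congr rfl fun b _ => ?_
                  unfold probOf
                  rw [Finset.mul_sum]
                  refine Finset.sum_congr rfl fun s _ => ?_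
                  by_cases h : (extR a0 s).best (B \ {a0}) hB' = b <;> simp [h, mul_comm]
              _ = ∑ b ∈ B \ {a0}, ρ B b := by
                  refine Finset.sum_congr rfl fun b hb => ?_
                  rw [hprob (B \ {a0}) hB'sub hB' b hb]
                  exact hφρ b hb
          have hsum_ρ : (∑ b ∈ B \ {a0}, ρ B b) = 1 - ρ B a0 := by
            have h1 : (∑ b ∈ B, ρ B b) = 1 := (hρ B hBD).2.1
            have h2 : (∑ b ∈ insert a0 (B \ {a0}), ρ B b)
                = ρ B a0 + ∑ b ∈ B \ {a0}, ρ B b :=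
              Finset.sum_insert (by simp)
            rw [hins, h1] at h2
            linarith
          by_cases haB' : a ∈ B \ {a0}
          · have hane : a ≠ a0 := by simpa using (Finset.mem_sdiff.1 haB').2
            calc (∑ s, ν s * (wg s B * (if a = (extR a0 s).best B hBne then 1 else 0)
                    + (1 - wg s B) * (if a = a0 then 1 else 0)))
                = ∑ s, (if (extR a0 s).best (B \ {a0}) hB' = a then ν s * φ B a else 0) := by
                  refine Finset.sum_congr rfl fun s _ => ?_
                  rw [hbestB s, hwgB s, if_neg hane]
                  by_cases h : (extR a0 s).best (B \ {a0}) hB' = a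
                  · rw [if_pos h, if_pos h.symm, h]
                    ring
                  · rw [if_neg h, if_neg (fun hc => h hc.symm)]
                    ring
              _ = φ B a * probOf ν (fun s => (extR a0 s).best (B \ {a0}) hB' = a) := by
                  unfold probOf
                  rw [Finset.mul_sum]
                  refine Finset.sum_congr rfl fun s _ => ?_
                  by_cases h : (extR a0 s).best (B \ {a0}) hB' = a <;> simp [h, mul_comm]
              _ = ρ B a := by
                  rw [hprob (B \ {a0}) hB'sub hB' a haB']
                  exact hφρ a haB'
          · by_cases ha0 : a = a0
            · have hterm2 : ∀ s, ν s * (wg s B * (if a = (extR a0 s).best B hBne then 1 else 0)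
                  + (1 - wg s B) * (if a = a0 then 1 else 0)) = ν s - ν s * wg s B := by
                intro s
                have hbne' : (extR a0 s).best B hBne ≠ a0 := by
                  rw [hbestB s]
                  have h2 := (Finset.mem_sdiff.1 ((extR a0 s).best_mem _ hB')).2
                  simpa using h2
                rw [if_neg (fun hc => hbne' (hc.symm.trans ha0)), if_pos ha0]
                ring
              rw [Finset.sum_congr rfl fun s _ => hterm2 s, Finset.sum_sub_distrib, hν.2,
                hsum_wg, hsum_ρ, ha0]
              ring
            · have haB : a ∉ B := by
                intro hc
                exact haB' (Finset.mem_sdiff.2 ⟨hc, by simpa using ha0⟩)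
              have hterm3 : ∀ s, ν s * (wg s B * (if a = (extR a0 s).best B hBne then 1 else 0)
                  + (1 - wg s B) * (if a = a0 then 1 else 0)) = 0 := by
                intro s
                rw [if_neg (fun hc => haB (by rw [hc]; exact (extR a0 s).best_mem B hBne)),
                  if_neg ha0]
                ring
              rw [Finset.sum_congr rfl fun s _ => hterm3 s, Finset.sum_const_zero]
              exact ((hρ B hBD).2.2 a haB).symm
        · -- B = {a0}
          have hBsing : B = {a0} := by
            have hsub : B ⊆ {a0} := by
              rw [← Finset.sdiff_eq_empty_iff_subset]
              exact Finset.not_nonempty_iff_eq_empty.1 hB'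
            obtain ⟨x, hx⟩ := hBne
            have : x = a0 := Finset.mem_singleton.1 (hsub hx)
            exact Finset.Subset.antisymm hsub (Finset.singleton_subset_iff.2 (this ▸ hx))
          have hbest0 : ∀ s, (extR a0 s).best B hBne = a0 := by
            intro s
            have hmm := (extR a0 s).best_mem B hBne
            exact Finset.mem_singleton.1 (by rwa [← hBsing])
          have hterm4 : ∀ s, ν s * (wg s B * (if a = (extR a0 s).best B hBne then 1 else 0)
              + (1 - wg s B) * (if a = a0 then 1 else 0))
              = ν s * (if a = a0 then 1 else 0) := by
            intro s
            rw [hbest0 s]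
            ring
          rw [Finset.sum_congr rfl fun s _ => hterm4 s, ← Finset.sum_mul, hν.2, one_mul]
          by_cases ha : a = a0
          · rw [if_pos ha]
            have h1 : (∑ b ∈ B, ρ B b) = 1 := (hρ B hBD).2.1
            rw [hBsing, Finset.sum_singleton] at h1
            rw [ha, hBsing]
            exact h1.symm
          · rw [if_neg ha]
            refine ((hρ B hBD).2.2 a ?_).symm
            rw [hBsing]
            simpa using ha
      · -- a0 ∉ B
        have hBsub : B ⊆ ({a0}ᶜ : Finset A) := by
          intro x hx
          rw [Finset.mem_compl, Finset.mem_singleton]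
          rintro rfl
          exact ha0B hx
        have hinner : ∀ s, (∑ E ∈ SS.powerset, W (s, E) * zf (s, E) (B, a))
            = ν s * (if a = (extR a0 s).best B hBne then 1 else 0) := by
          intro s
          have hterm : ∀ E ∈ SS.powerset, W (s, E) * zf (s, E) (B, a)
              = (∏ M ∈ SS, if M ∈ E then wg s M else 1 - wg s M) *
                  (ν s * (if a = (extR a0 s).best B hBne then 1 else 0)) := by
            intro E hE
            rw [hzval (s, E), if_pos (Or.inl ha0B)]
            simp only [hW]
            ring
          rw [Finset.sum_congr rfl hterm, ← Finset.sum_mul,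
            sum_powerset_prod SS (wg s) (fun M => 1 - wg s M),
            Finset.prod_eq_one (fun M _ => by ring), one_mul]
        rw [Finset.sum_congr rfl fun s _ => hinner s]
        by_cases haB : a ∈ B
        · calc (∑ s, ν s * (if a = (extR a0 s).best B hBne then 1 else 0))
              = probOf ν (fun s => (extR a0 s).best B hBne = a) := by
                unfold probOf
                refine Finset.sum_congr rfl fun s _ => ?_
                by_cases h : (extR a0 s).best B hBne = a
                · rw [if_pos h.symm, if_pos h, mul_one]
                · rw [if_neg (fun hc => h hc.symm), if_neg h, mul_zero]
            _ = ρ B a := hprob B hBsub hBne a haB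
        · have hterm5 : ∀ s, ν s * (if a = (extR a0 s).best B hBne then 1 else 0) = 0 := by
            intro s
            rw [if_neg (fun hc => haB (by rw [hc]; exact (extR a0 s).best_mem B hBne)),
              mul_zero]
          rw [Finset.sum_congr rfl fun s _ => hterm5 s, Finset.sum_const_zero]
          exact ((hρ B hBD).2.2 a haB).symm
    -- nonnegativity and total mass
    have hWnn : ∀ p ∈ tt, 0 ≤ W p := by
      rintro ⟨s, E⟩ _
      simp only [hW]
      refine mul_nonneg (hν.1 s) (Finset.prod_nonneg fun M hM => ?_)
      by_cases h : M ∈ E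
      · rw [if_pos h]
        exact (hwg01 s M hM).1
      · rw [if_neg h]
        linarith [(hwg01 s M hM).2]
    have hWsum : (∑ p ∈ tt, W p) = 1 := by
      rw [htt, Finset.sum_product]
      have hin : ∀ s, (∑ E ∈ SS.powerset, W (s, E)) = ν s := by
        intro s
        simp only [hW]
        rw [← Finset.mul_sum, sum_powerset_prod SS (wg s) (fun M => 1 - wg s M),
          Finset.prod_eq_one (fun M _ => by ring), mul_one]
      rw [Finset.sum_congr rfl fun s _ => hin s]
      exact hν.2
    have hmemV : ∀ p ∈ tt, zf p ∈ {q : Finset A × A → ℝ |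
        ∃ r : Ranking A, ∃ E : Finset (Finset A),
          E ⊆ fullDomain A ∧ q = restrictTo (fullDomain A) (vertexSCF a0 r E)} := by
      rintro ⟨s, E⟩ hp
      refine ⟨extR a0 s, E, ?_, rfl⟩
      have hE : E ⊆ SS := Finset.mem_powerset.1 (Finset.mem_product.1 hp).2
      exact hE.trans (Finset.filter_subset _ _)
    have hfinal := Finset.centerMass_mem_convexHull tt hWnn (by rw [hWsum]; norm_num) hmemV
    rwa [Finset.centerMass, hWsum, inv_one, one_smul, ← hrepr] at hfinal
  · intro hmem
    rw [_root_.convexHull_eq] at hmem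
    obtain ⟨ι, tt, w, zf, hw0, hw1, hzmem, hcm⟩ := hmem
    have hcm' : (∑ i ∈ tt, w i • zf i) = restrictTo (fullDomain A) ρ := by
      rw [← hcm]
      simp only [Finset.centerMass, hw1, inv_one, one_smul]
    have hrne : Nonempty (Ranking A) := ⟨Fintype.equivFin A⟩
    have hz' : ∀ i, ∃ (r : Ranking A) (E : Finset (Finset A)), i ∈ tt →
        (E ⊆ fullDomain A ∧ zf i = restrictTo (fullDomain A) (vertexSCF a0 r E)) := by
      intro i
      by_cases hi : i ∈ tt
      · obtain ⟨r, E, hE, hzeq⟩ := hzmem i hi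
        exact ⟨r, E, fun _ => ⟨hE, hzeq⟩⟩
      · exact ⟨Classical.arbitrary _, ∅, fun h => absurd h hi⟩
    choose rr EE hrE using hz'
    have hcoord : ∀ B : Finset A, B ∈ fullDomain A → ∀ a : A,
        ρ B a = ∑ i ∈ tt, w i * vertexSCF a0 (rr i) (EE i) B a := by
      intro B hBD a
      have hq := congrFun hcm' (B, a)
      rw [Finset.sum_apply] at hq
      rw [show restrictTo (fullDomain A) ρ (B, a) = ρ B a from if_pos hBD] at hq
      rw [← hq]
      refine Finset.sum_congr rfl fun i hi => ?_
      rw [Pi.smul_apply, smul_eq_mul, (hrE i hi).2,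
        show restrictTo (fullDomain A) (vertexSCF a0 (rr i) (EE i)) (B, a)
          = vertexSCF a0 (rr i) (EE i) B a from if_pos hBD]
    constructor
    · intro D hDsub hDD hinsD b hbD
      rw [hcoord D hDD b, hcoord _ hinsD b]
      refine Finset.sum_le_sum fun i hi => ?_
      refine mul_le_mul_of_nonneg_left ?_ (hw0 i hi)
      have hDne : D.Nonempty := (hdom D).1 hDD
      have ha0D : a0 ∉ D := by
        intro hc
        have := hDsub hc
        simp at this
      exact vertexSCF_LM a0 (rr i) (EE i) hDne ha0D hbD
    · refine ⟨fun s => ∑ i ∈ tt,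
          @ite ℝ (restrictR a0 (rr i) = s) (Classical.propDecidable _) (w i) 0, ⟨?_, ?_⟩, ?_⟩
      · intro s
        refine Finset.sum_nonneg fun i hi => ?_
        by_cases h : restrictR a0 (rr i) = s
        · rw [if_pos h]
          exact hw0 i hi
        · rw [if_neg h]
      · rw [Finset.sum_comm]
        have hone : ∀ i ∈ tt, (∑ s, @ite ℝ (restrictR a0 (rr i) = s)
            (Classical.propDecidable _) (w i) 0) = w i := by
          intro i _
          rw [Finset.sum_eq_single (restrictR a0 (rr i))]
          · rw [if_pos rfl]
          · intro b _ hb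
            rw [if_neg (fun hc => hb hc.symm)]
          · intro h
            exact absurd (Finset.mem_univ _) h
        rw [Finset.sum_congr rfl hone]
        exact hw1
      · intro B hBD hBsub a haB
        have hBne : B.Nonempty := (hdom B).1 hBD
        have ha0B : a0 ∉ B := fun hc => by simpa using hBsub hc
        rw [probOf_pushforward tt w (fun i => restrictR a0 (rr i)) _]
        rw [hcoord B hBD a]
        refine Finset.sum_congr rfl fun i hi => ?_
        have hiff : (∀ (bt : {c : A // c ∈ ({a0}ᶜ : Finset A)}), (bt : A) ∈ B →
            (bt : A) ≠ a → (restrictR a0 (rr i)).pref ⟨a, hBsub haB⟩ bt) ↔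
            a = (rr i).best B hBne := by
          constructor
          · intro h
            symm
            rw [(rr i).eq_best_iff hBne haB]
            intro c hc hcb
            have := h ⟨c, hBsub hc⟩ hc hcb
            rwa [pref_restrictR_iff] at this
          · intro h bt hbt hne2
            rw [pref_restrictR_iff]
            exact ((rr i).eq_best_iff hBne haB).1 h.symm bt.val hbt hne2
        unfold vertexSCF
        rw [dif_pos hBne, if_pos (Or.inl ha0B)]
        by_cases h : a = (rr i).best B hBne
        · rw [if_pos h, if_pos (hiff.2 h), mul_one]
        · rw [if_neg h, if_neg (fun hc => h (hiff.1 hc)), mul_zero]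
end
end
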